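/- arXiv:2006.15858 — 2 statements merged into one kernel-verified Lean document; each statement's English description precedes it below -/
import Mathlib

section
/- For 1 < q, s < ∞, a weight w belongs to A_q(ℝ^d) ∩ RH_s(ℝ^d) if and only if w^s belongs to A_{s(q-1)+1}(ℝ^d). -/
open MeasureTheory Filter Topology ENNReal NNReal
noncomputable section

/-- Shorthand: `ENNReal.ofReal`. -/
def oR (t : ℝ) : ℝ≥0∞ := ENNReal.ofReal t

/-- An axis-parallel cube in `ℝ^d`. -/
def IsCube {d : ℕ} (Q : Set (Fin d → ℝ)) : Prop :=
  ∃ (a : Fin d → ℝ) (r : ℝ), 0 < r ∧ Q = Set.univ.pi fun i => Set.Icc (a i) (a i + r)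

/-- The `ℝ≥0∞`-valued average of `g` over a set `Q`. -/
def avgE {d : ℕ} (Q : Set (Fin d → ℝ)) (g : (Fin d → ℝ) → ℝ≥0∞) : ℝ≥0∞ :=
  (volume Q)⁻¹ * ∫⁻ x in Q, g x

/-- A weight: locally integrable and a.e. positive. -/
def IsWeight {d : ℕ} (w : (Fin d → ℝ) → ℝ) : Prop :=
  MeasureTheory.LocallyIntegrable w volume ∧ ∀ᵐ x ∂(volume : Measure (Fin d → ℝ)), 0 < w x

/-- The Muckenhoupt `A_p` constant, `1 < p < ∞`. -/
def ApConst {d : ℕ} (p : ℝ) (w : (Fin d → ℝ) → ℝ) : ℝ≥0∞ :=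
  ⨆ Q : {S : Set (Fin d → ℝ) // IsCube S},
    avgE Q.1 (fun x => oR (w x)) *
      (avgE Q.1 fun x => oR (w x ^ (-(1:ℝ) / (p - 1)))) ^ (p - 1)

/-- The Muckenhoupt `A_1` constant. -/
def A1Const {d : ℕ} (w : (Fin d → ℝ) → ℝ) : ℝ≥0∞ :=
  ⨆ Q : {S : Set (Fin d → ℝ) // IsCube S},
    avgE Q.1 (fun x => oR (w x)) *
      essSup (fun x => oR ((w x)⁻¹)) (volume.restrict Q.1)

/-- Membership in the Muckenhoupt class `A_p(ℝ^d)`, `1 < p < ∞`. -/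
def MemAp {d : ℕ} (p : ℝ) (w : (Fin d → ℝ) → ℝ) : Prop :=
  IsWeight w ∧ ApConst p w < ⊤

/-- The Muckenhoupt–Wheeden `A_{p,q}` constant:
`sup_Q ⟨w^q⟩_Q^{1/q} ⟨w^{-p'}⟩_Q^{1/p'}` with `p' = p/(p-1)`. -/
def ApqConst {d : ℕ} (p q : ℝ) (w : (Fin d → ℝ) → ℝ) : ℝ≥0∞ :=
  ⨆ Q : {S : Set (Fin d → ℝ) // IsCube S},
    (avgE Q.1 fun x => oR (w x ^ q)) ^ (1 / q) *
      (avgE Q.1 fun x => oR (w x ^ (-(p / (p - 1))))) ^ ((p - 1) / p)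

/-- Membership in `A_{p,q}(ℝ^d)`. -/
def MemApq {d : ℕ} (p q : ℝ) (w : (Fin d → ℝ) → ℝ) : Prop :=
  IsWeight w ∧ ApqConst p q w < ⊤

/-- The reverse Hölder constant `sup_Q ⟨w^s⟩_Q^{1/s} ⟨w⟩_Q^{-1}`. -/
def RHConst {d : ℕ} (s : ℝ) (w : (Fin d → ℝ) → ℝ) : ℝ≥0∞ :=
  ⨆ Q : {S : Set (Fin d → ℝ) // IsCube S},
    (avgE Q.1 fun x => oR (w x ^ s)) ^ (1 / s) * (avgE Q.1 fun x => oR (w x))⁻¹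

/-- Membership in the reverse Hölder class `RH_s(ℝ^d)`. -/
def MemRH {d : ℕ} (s : ℝ) (w : (Fin d → ℝ) → ℝ) : Prop :=
  IsWeight w ∧ RHConst s w < ⊤

/-- Conjugate exponent `t' = t/(t-1)`. -/
def conjExp (t : ℝ) : ℝ := t / (t - 1)

/-- Membership in the limited-range class `A_{q/p_-} ∩ RH_{(p_+/q)'}`, with the
convention that for `q = p_-` the condition is the `A_1` condition and for `q = p_+`
the reverse Hölder condition is vacuous. -/
def MemLR {d : ℕ} (pm pp q : ℝ) (w : (Fin d → ℝ) → ℝ) : Prop :=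
  IsWeight w ∧ (q = pm → A1Const w < ⊤) ∧ (pm < q → ApConst (q / pm) w < ⊤) ∧
    (q < pp → RHConst (conjExp (pp / q)) w < ⊤)

/-- The weighted `L^p` (quasi-)norm `(∫ |f|^p w)^{1/p}`, `ℝ≥0∞`-valued. -/
def wnorm {d : ℕ} (p : ℝ) (w : (Fin d → ℝ) → ℝ) (f : (Fin d → ℝ) → ℂ) : ℝ≥0∞ :=
  (∫⁻ x, (‖f x‖₊ : ℝ≥0∞) ^ p * oR (w x)) ^ (1 / p)

/-- Membership in the weighted Lebesgue space `L^p(w)`. -/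
def MemWLp {d : ℕ} (p : ℝ) (w : (Fin d → ℝ) → ℝ) (f : (Fin d → ℝ) → ℂ) : Prop :=
  AEStronglyMeasurable f (volume : Measure (Fin d → ℝ)) ∧ wnorm p w f < ⊤

/-- `T` is bounded from `L^p(w)` to `L^q(v)`. -/
def BoundedOp {d : ℕ} (p : ℝ) (w : (Fin d → ℝ) → ℝ) (q : ℝ) (v : (Fin d → ℝ) → ℝ)
    (T : ((Fin d → ℝ) → ℂ) →ₗ[ℂ] ((Fin d → ℝ) → ℂ)) : Prop :=
  ∃ C : ℝ≥0, ∀ f, MemWLp p w f → wnorm q v (T f) ≤ C * wnorm p w f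

/-- `T` is compact with respect to an input norm `Nin` and an output norm `Nout`:
every norm-bounded sequence of (a.e. strongly measurable) functions has a subsequence
whose image converges in the output norm. -/
def CompactWithNorms {d : ℕ} (Nin Nout : ((Fin d → ℝ) → ℂ) → ℝ≥0∞)
    (T : ((Fin d → ℝ) → ℂ) →ₗ[ℂ] ((Fin d → ℝ) → ℂ)) : Prop :=
  ∀ f : ℕ → ((Fin d → ℝ) → ℂ),
    (∀ n, AEStronglyMeasurable (f n) (volume : Measure (Fin d → ℝ))) →
    (∀ n, Nin (f n) ≤ 1) →
    ∃ (φ : ℕ → ℕ) (g : (Fin d → ℝ) → ℂ), StrictMono φ ∧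
      Tendsto (fun n => Nout (T (f (φ n)) - g)) atTop (nhds 0)

/-- `T` is a compact operator from `L^p(w)` to `L^q(v)`. -/
def CompactOp {d : ℕ} (p : ℝ) (w : (Fin d → ℝ) → ℝ) (q : ℝ) (v : (Fin d → ℝ) → ℝ)
    (T : ((Fin d → ℝ) → ℂ) →ₗ[ℂ] ((Fin d → ℝ) → ℂ)) : Prop :=
  CompactWithNorms (wnorm p w) (wnorm q v) T

/-- The closed unit strip in `ℂ`. -/
def strip : Set ℂ := {z | 0 ≤ z.re ∧ z.re ≤ 1}

/-- The open unit strip in `ℂ`. -/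
def stripInt : Set ℂ := {z | 0 < z.re ∧ z.re < 1}

/-- The norm of Calderón's complex interpolation space `[L^{p₀}(w₀), L^{p₁}(w₁)]_θ`
realized via analytic families of functions on the strip. -/
def interpNorm {d : ℕ} (p0 : ℝ) (w0 : (Fin d → ℝ) → ℝ) (p1 : ℝ) (w1 : (Fin d → ℝ) → ℝ)
    (θ : ℝ) (f : (Fin d → ℝ) → ℂ) : ℝ≥0∞ :=
  ⨅ (F : ℂ → (Fin d → ℝ) → ℂ) (_ : F (θ : ℂ) = f)
    (_ : ∀ᵐ x ∂(volume : Measure (Fin d → ℝ)),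
      ContinuousOn (fun z => F z x) strip ∧ DifferentiableOn ℂ (fun z => F z x) stripInt),
    max (⨆ t : ℝ, wnorm p0 w0 (F (t * Complex.I)))
        (⨆ t : ℝ, wnorm p1 w1 (F (1 + t * Complex.I)))

/-- An admissible growth function `φ : [0,∞) → [1,∞)`. -/
def Admissible (φ : ℝ → ℝ) : Prop :=
  (∀ t, 0 ≤ t → 1 ≤ φ t) ∧ MonotoneOn φ (Set.Ici 0) ∧
    ∃ ω > (0:ℝ), ∃ C > (0:ℝ), ∀ ζ t : ℝ, 1 ≤ ζ → 0 ≤ t → φ (ζ * t) ≤ C * ζ ^ ω * φ t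

/-- The `A_p^ζ(φ)` constant of Tang/Wu–Wang. -/
def ApZConst {d : ℕ} (φ : ℝ → ℝ) (ζ p : ℝ) (w : (Fin d → ℝ) → ℝ) : ℝ≥0∞ :=
  ⨆ Q : {S : Set (Fin d → ℝ) // IsCube S},
    avgE Q.1 (fun x => oR (w x)) *
      (avgE Q.1 fun x => oR (w x ^ (-(1:ℝ) / (p - 1)))) ^ (p - 1) *
      (oR (φ ((volume Q.1).toReal) ^ (ζ * p)))⁻¹

/-- Membership in `A_p^ζ(φ)`. -/
def MemApZ {d : ℕ} (φ : ℝ → ℝ) (ζ p : ℝ) (w : (Fin d → ℝ) → ℝ) : Prop :=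
  IsWeight w ∧ ApZConst φ ζ p w < ⊤
namespace ApRH

variable {d : ℕ} {Q : Set (Fin d → ℝ)} {w : (Fin d → ℝ) → ℝ}

lemma cube_vol_pos (hQ : IsCube Q) : 0 < volume Q := by
  obtain ⟨a, r, hr, rfl⟩ := hQ
  rw [volume_pi_pi]
  simp only [Real.volume_Icc, add_sub_cancel_left]
  rw [Finset.prod_const]
  exact ENNReal.pow_pos (ENNReal.ofReal_pos.2 hr) _

lemma cube_vol_lt_top (hQ : IsCube Q) : volume Q < ⊤ := by
  obtain ⟨a, r, hr, rfl⟩ := hQ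
  rw [volume_pi_pi]
  simp only [Real.volume_Icc, add_sub_cancel_left]
  rw [Finset.prod_const]
  exact pow_lt_top ofReal_lt_top

lemma cube_isCompact (hQ : IsCube Q) : IsCompact Q := by
  obtain ⟨a, r, hr, rfl⟩ := hQ
  exact isCompact_univ_pi fun i => isCompact_Icc

lemma avgE_congr {f g : (Fin d → ℝ) → ℝ≥0∞} (h : f =ᵐ[volume.restrict Q] g) :
    avgE Q f = avgE Q g := by
  unfold avgE; rw [lintegral_congr_ae h]

lemma lint_ne_zero (hQ : IsCube Q) (hwm : AEMeasurable w volume)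
    (hwpos : ∀ᵐ x ∂(volume : Measure (Fin d → ℝ)), 0 < w x) :
    ∫⁻ x in Q, oR (w x) ≠ 0 := by
  intro h
  have hm : AEMeasurable (fun x => oR (w x)) (volume.restrict Q) :=
    ENNReal.measurable_ofReal.comp_aemeasurable hwm.restrict
  rw [lintegral_eq_zero_iff' hm] at h
  have hfalse : ∀ᵐ x ∂(volume.restrict Q), False := by
    filter_upwards [h, ae_restrict_of_ae hwpos] with x h1 h2
    simp only [Pi.zero_apply, oR, ENNReal.ofReal_eq_zero] at h1
    linarith
  have h3 : (volume.restrict Q) Set.univ = 0 := by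
    rw [ae_iff] at hfalse; simpa using hfalse
  rw [Measure.restrict_apply_univ] at h3
  exact absurd h3 (ne_of_gt (cube_vol_pos hQ))

lemma lint_ne_top (hQ : IsCube Q) (hloc : LocallyIntegrable w volume) :
    ∫⁻ x in Q, oR (w x) ≠ ⊤ := by
  have hint : IntegrableOn w Q volume := hloc.integrableOn_isCompact (cube_isCompact hQ)
  have hle : ∫⁻ x in Q, oR (w x) ≤ ∫⁻ x in Q, ‖w x‖ₑ := by
    refine lintegral_mono fun x => ?_
    rw [oR, Real.enorm_eq_ofReal_abs]
    exact ENNReal.ofReal_le_ofReal (le_abs_self _)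
  exact ne_top_of_le_ne_top hint.2.ne hle

lemma avg_ne_zero (hQ : IsCube Q) (hwm : AEMeasurable w volume)
    (hwpos : ∀ᵐ x ∂(volume : Measure (Fin d → ℝ)), 0 < w x) :
    avgE Q (fun x => oR (w x)) ≠ 0 :=
  mul_ne_zero (ENNReal.inv_ne_zero.2 (cube_vol_lt_top hQ).ne) (lint_ne_zero hQ hwm hwpos)

lemma avg_ne_top (hQ : IsCube Q) (hloc : LocallyIntegrable w volume) :
    avgE Q (fun x => oR (w x)) ≠ ⊤ :=
  ENNReal.mul_ne_top (ENNReal.inv_ne_top.2 (cube_vol_pos hQ).ne')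
    (lint_ne_top hQ hloc)

lemma lint_ne_top_of_avg (hQ : IsCube Q) {g : (Fin d → ℝ) → ℝ≥0∞}
    (h : avgE Q g ≠ ⊤) : ∫⁻ x in Q, g x ≠ ⊤ := by
  intro htop
  apply h
  unfold avgE
  rw [htop, ENNReal.mul_top (ENNReal.inv_ne_zero.2 (cube_vol_lt_top hQ).ne)]

lemma isWeight_rpow (hw : IsWeight w) {s : ℝ} (_hs : 0 < s)
    (hfin : ∀ Q : Set (Fin d → ℝ), IsCube Q → avgE Q (fun x => oR (w x ^ s)) ≠ ⊤) :
    IsWeight (fun x => w x ^ s) := by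
  have hwm : AEMeasurable w volume := hw.1.aestronglyMeasurable.aemeasurable
  constructor
  · intro x₀
    set Q : Set (Fin d → ℝ) := Set.univ.pi fun i => Set.Icc (x₀ i - 1) ((x₀ i - 1) + 2)
      with hQdef
    have hQ : IsCube Q := ⟨fun i => x₀ i - 1, 2, two_pos, rfl⟩
    refine ⟨Q, ?_, ?_⟩
    · have hopen : IsOpen (Set.univ.pi fun i => Set.Ioo (x₀ i - 1) (x₀ i + 1)) :=
        isOpen_set_pi Set.finite_univ fun i _ => isOpen_Ioo
      refine Filter.mem_of_superset (hopen.mem_nhds ?_) ?_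
      · exact Set.mem_univ_pi.2 fun i => ⟨by linarith, by linarith⟩
      · refine Set.pi_mono fun i _ => ?_
        intro t ht
        exact ⟨le_of_lt ht.1, by rcases ht with ⟨h1, h2⟩; linarith⟩
    · constructor
      · exact ((hwm.pow_const s).restrict).aestronglyMeasurable
      · have hcong : ∫⁻ x in Q, ‖w x ^ s‖ₑ = ∫⁻ x in Q, oR (w x ^ s) := by
          apply lintegral_congr_ae
          filter_upwards [ae_restrict_of_ae hw.2] with x hx
          rw [oR, ← Real.enorm_eq_ofReal (Real.rpow_pos_of_pos hx s).le]
        rw [HasFiniteIntegral, hcong]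
        exact (lint_ne_top_of_avg hQ (hfin Q hQ)).lt_top
  · filter_upwards [hw.2] with x hx
    exact Real.rpow_pos_of_pos hx s


variable {d : ℕ} {Q : Set (Fin d → ℝ)} {w : (Fin d → ℝ) → ℝ}

/-- Jensen: `avg g ≤ (avg g^s)^(1/s)` for `s > 1`. -/
lemma avg_le_rpow (hV0 : volume Q ≠ 0) (hVt : volume Q ≠ ⊤)
    {g : (Fin d → ℝ) → ℝ≥0∞} (hg : AEMeasurable g (volume.restrict Q))
    {s : ℝ} (hs : 1 < s) :
    avgE Q g ≤ (avgE Q fun x => g x ^ s) ^ (1 / s) := by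
  set V := volume Q with hV
  have hs0 : (0:ℝ) < s := by linarith
  have hinv0 : (0:ℝ) < s⁻¹ := by positivity
  have hinv1 : s⁻¹ < 1 := by
    rw [inv_lt_one_iff₀]; right; exact hs
  have hpq : s.HolderConjugate (1 - s⁻¹)⁻¹ := by
    have := Real.HolderConjugate.inv_one_sub_inv hinv0 hinv1
    rwa [inv_inv] at this
  have holder := ENNReal.lintegral_mul_le_Lp_mul_Lq (volume.restrict Q) hpq hg
    (aemeasurable_const (b := (1:ℝ≥0∞)))
  simp only [Pi.mul_apply, mul_one, ENNReal.one_rpow, lintegral_one,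
    Measure.restrict_apply_univ, lintegral_const] at holder
  rw [show (1:ℝ)/(1-s⁻¹)⁻¹ = 1 - s⁻¹ by rw [one_div, inv_inv],
    show (1:ℝ)/s = s⁻¹ from one_div s] at holder
  unfold avgE
  rw [show (1:ℝ)/s = s⁻¹ from one_div s]
  calc V⁻¹ * ∫⁻ x in Q, g x
      ≤ V⁻¹ * ((∫⁻ x in Q, g x ^ s) ^ s⁻¹ * V ^ (1 - s⁻¹)) :=
        mul_le_mul_right holder _
    _ = (V⁻¹ * V ^ (1 - s⁻¹)) * (∫⁻ x in Q, g x ^ s) ^ s⁻¹ := by ring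
    _ = (V⁻¹) ^ s⁻¹ * (∫⁻ x in Q, g x ^ s) ^ s⁻¹ := by
        congr 1
        conv_lhs => rw [← ENNReal.rpow_neg_one V]
        rw [← ENNReal.rpow_add _ _ hV0 hVt]
        conv_rhs => rw [← ENNReal.rpow_neg_one V, ← ENNReal.rpow_mul]
        congr 1; ring
    _ = (V⁻¹ * ∫⁻ x in Q, g x ^ s) ^ s⁻¹ := by
        rw [ENNReal.mul_rpow_of_nonneg _ _ (by positivity)]

/-- Hölder duality: `1 ≤ ⟨w⟩ ⟨w^{-1/(q-1)}⟩^{q-1}`. -/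
lemma one_le_mul (hV0 : volume Q ≠ 0) (hVt : volume Q ≠ ⊤)
    (hwm : AEMeasurable w volume)
    (hwpos : ∀ᵐ x ∂(volume : Measure (Fin d → ℝ)), 0 < w x)
    {q : ℝ} (hq : 1 < q) :
    1 ≤ avgE Q (fun x => oR (w x)) *
        (avgE Q fun x => oR (w x ^ (-(1:ℝ) / (q - 1)))) ^ (q - 1) := by
  set V := volume Q with hVdef
  have hq0 : (0:ℝ) < q := by linarith
  have hq1 : q - 1 ≠ 0 := by intro h; rw [sub_eq_zero] at h; linarith
  have hinv0 : (0:ℝ) < q⁻¹ := by positivity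
  have hinv1 : q⁻¹ < 1 := by rw [inv_lt_one_iff₀]; right; exact hq
  have hpq : q.HolderConjugate (1 - q⁻¹)⁻¹ := by
    have := Real.HolderConjugate.inv_one_sub_inv hinv0 hinv1
    rwa [inv_inv] at this
  have h1q : 1 - q⁻¹ ≠ 0 := by
    intro h
    have : q⁻¹ = 1 := by linarith
    rw [this] at hinv1; exact lt_irrefl _ hinv1
  set f : (Fin d → ℝ) → ℝ≥0∞ := fun x => oR (w x) ^ q⁻¹ with hf
  set g : (Fin d → ℝ) → ℝ≥0∞ := fun x => oR (w x ^ (-(1:ℝ) / (q - 1))) ^ (1 - q⁻¹) with hg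
  have hwm' : AEMeasurable (fun x => oR (w x)) (volume.restrict Q) :=
    (ENNReal.measurable_ofReal.comp_aemeasurable hwm.restrict)
  have hbm : AEMeasurable (fun x => oR (w x ^ (-(1:ℝ) / (q - 1)))) (volume.restrict Q) :=
    (ENNReal.measurable_ofReal.comp_aemeasurable ((hwm.pow_const _).restrict))
  have hfm : AEMeasurable f (volume.restrict Q) := hwm'.pow_const _
  have hgm : AEMeasurable g (volume.restrict Q) := hbm.pow_const _
  have hfg : f * g =ᵐ[volume.restrict Q] fun _ => 1 := by
    filter_upwards [ae_restrict_of_ae hwpos] with x hx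
    have ha0 : oR (w x) ≠ 0 := by
      simp only [oR, ne_eq, ENNReal.ofReal_eq_zero, not_le]; exact hx
    have hat : oR (w x) ≠ ⊤ := ENNReal.ofReal_ne_top
    have hb : oR (w x ^ (-(1:ℝ) / (q - 1))) = oR (w x) ^ (-(1:ℝ) / (q - 1)) :=
      (ENNReal.ofReal_rpow_of_pos hx).symm
    simp only [Pi.mul_apply, hf, hg, hb, ← ENNReal.rpow_mul]
    rw [← ENNReal.rpow_add _ _ ha0 hat]
    rw [show q⁻¹ + -(1:ℝ) / (q - 1) * (1 - q⁻¹) = 0 by field_simp; ring]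
    exact ENNReal.rpow_zero
  have holder := ENNReal.lintegral_mul_le_Lp_mul_Lq (volume.restrict Q) hpq hfm hgm
  have hint1 : ∫⁻ x in Q, (f * g) x = V := by
    rw [lintegral_congr_ae hfg]; simp [hVdef]
  have hfq : ∀ x, f x ^ q = oR (w x) := by
    intro x
    rw [hf, ← ENNReal.rpow_mul, inv_mul_cancel₀ (ne_of_gt hq0), ENNReal.rpow_one]
  have hgq : ∀ x, g x ^ (1 - q⁻¹)⁻¹ = oR (w x ^ (-(1:ℝ) / (q - 1))) := by
    intro x
    rw [hg, ← ENNReal.rpow_mul, mul_inv_cancel₀ h1q, ENNReal.rpow_one]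
  rw [hint1] at holder
  simp only [hfq, hgq] at holder
  rw [show (1:ℝ)/(1-q⁻¹)⁻¹ = 1 - q⁻¹ by rw [one_div, inv_inv]] at holder
  -- holder : V ≤ (∫ oR w)^(1/q) * (∫ oR (w ^ ..))^(1-q⁻¹)
  set A := ∫⁻ x in Q, oR (w x) with hA
  set B := ∫⁻ x in Q, oR (w x ^ (-(1:ℝ) / (q - 1))) with hB
  have hVq : V ^ q ≤ A * B ^ (q - 1) := by
    calc V ^ q ≤ ((A ^ ((1:ℝ)/q)) * B ^ (1 - q⁻¹)) ^ q :=
          ENNReal.rpow_le_rpow holder (le_of_lt hq0)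
      _ = (A ^ (1/q)) ^ q * (B ^ (1 - q⁻¹)) ^ q := by
          rw [ENNReal.mul_rpow_of_nonneg _ _ (le_of_lt hq0)]
      _ = A * B ^ (q - 1) := by
          rw [← ENNReal.rpow_mul, ← ENNReal.rpow_mul]
          rw [show 1/q * q = 1 by field_simp, show (1 - q⁻¹) * q = q - 1 by field_simp]
          rw [ENNReal.rpow_one]
  have hVi0 : V⁻¹ ≠ 0 := ENNReal.inv_ne_zero.2 hVt
  have hVit : V⁻¹ ≠ ⊤ := ENNReal.inv_ne_top.2 hV0
  unfold avgE
  rw [← hVdef, ← hA, ← hB]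
  calc (1:ℝ≥0∞) = (V⁻¹ * V) ^ q := by rw [ENNReal.inv_mul_cancel hV0 hVt, ENNReal.one_rpow]
    _ = (V⁻¹) ^ q * V ^ q := by rw [ENNReal.mul_rpow_of_nonneg _ _ (le_of_lt hq0)]
    _ ≤ (V⁻¹) ^ q * (A * B ^ (q - 1)) := mul_le_mul_right hVq _
    _ = ((V⁻¹) ^ (1:ℝ) * (V⁻¹) ^ (q-1)) * (A * B ^ (q - 1)) := by
        rw [← ENNReal.rpow_add 1 (q-1) hVi0 hVit, show (1:ℝ)+(q-1)=q by ring]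
    _ = (V⁻¹ * (V⁻¹) ^ (q-1)) * (A * B ^ (q - 1)) := by rw [ENNReal.rpow_one]
    _ = (V⁻¹ * A) * (V⁻¹ ^ (q-1) * B ^ (q-1)) := by ring
    _ = (V⁻¹ * A) * (V⁻¹ * B) ^ (q - 1) := by
        rw [ENNReal.mul_rpow_of_nonneg _ _ (by linarith : (0:ℝ) ≤ q - 1)]

end ApRH

/-- For `1 < q, s < ∞`, `w ∈ A_q(ℝ^d) ∩ RH_s(ℝ^d)` iff
`w^s ∈ A_{s(q-1)+1}(ℝ^d)`. -/
theorem Ap_inter_RH_iff (d : ℕ) (q s : ℝ) (hq : 1 < q) (hs : 1 < s)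
    (w : (Fin d → ℝ) → ℝ) (hw : IsWeight w) :
    (MemAp q w ∧ MemRH s w) ↔ MemAp (s * (q - 1) + 1) (fun x => w x ^ s) := by
  have hwm : AEMeasurable w volume := hw.1.aestronglyMeasurable.aemeasurable
  have hs0 : (0:ℝ) < s := by linarith
  have hsne : s ≠ 0 := ne_of_gt hs0
  have hq1 : (0:ℝ) < q - 1 := by linarith
  have hq1ne : q - 1 ≠ 0 := ne_of_gt hq1
  set p : ℝ := s * (q - 1) + 1 with hpdef
  have hp1 : p - 1 = s * (q - 1) := by rw [hpdef]; ring
  set W : {S : Set (Fin d → ℝ) // IsCube S} → ℝ≥0∞ :=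
    fun Q => avgE Q.1 (fun x => oR (w x)) with hW
  set X : {S : Set (Fin d → ℝ) // IsCube S} → ℝ≥0∞ :=
    fun Q => avgE Q.1 (fun x => oR (w x ^ s)) with hX
  set S' : {S : Set (Fin d → ℝ) // IsCube S} → ℝ≥0∞ :=
    fun Q => avgE Q.1 (fun x => oR (w x ^ (-(1:ℝ) / (q - 1)))) with hS
  have hW0 : ∀ Q, W Q ≠ 0 := fun Q => ApRH.avg_ne_zero Q.2 hwm hw.2
  have hWt : ∀ Q, W Q ≠ ⊤ := fun Q => ApRH.avg_ne_top Q.2 hw.1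
  have hSeq : ∀ Q : {S : Set (Fin d → ℝ) // IsCube S},
      (avgE Q.1 fun x => oR ((w x ^ s) ^ (-(1:ℝ) / (p - 1)))) = S' Q := by
    intro Q
    apply ApRH.avgE_congr
    filter_upwards [ae_restrict_of_ae hw.2] with x hx
    rw [← Real.rpow_mul hx.le,
      show s * (-(1:ℝ) / (p - 1)) = -(1:ℝ) / (q - 1) by rw [hp1]; field_simp]
  have hXeq : ∀ Q : {S : Set (Fin d → ℝ) // IsCube S},
      (avgE Q.1 fun x => oR (w x) ^ s) = X Q := by
    intro Q
    apply ApRH.avgE_congr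
    filter_upwards [ae_restrict_of_ae hw.2] with x hx
    exact ENNReal.ofReal_rpow_of_pos hx
  have hJ : ∀ Q, W Q ≤ (X Q) ^ ((1:ℝ)/s) := by
    intro Q
    rw [← hXeq Q]
    exact ApRH.avg_le_rpow (ApRH.cube_vol_pos Q.2).ne' (ApRH.cube_vol_lt_top Q.2).ne
      (ENNReal.measurable_ofReal.comp_aemeasurable hwm.restrict) hs
  have hD : ∀ Q, 1 ≤ W Q * (S' Q) ^ (q - 1) := fun Q =>
    ApRH.one_le_mul (ApRH.cube_vol_pos Q.2).ne' (ApRH.cube_vol_lt_top Q.2).ne hwm hw.2 hq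
  have hApP : ApConst p (fun x => w x ^ s) = ⨆ Q, X Q * (S' Q) ^ (p - 1) := by
    unfold ApConst
    exact iSup_congr fun Q => by simp only [hSeq Q]; rfl
  constructor
  · rintro ⟨⟨_, hA⟩, ⟨_, hR⟩⟩
    have hXle : ∀ Q, X Q ≤ (RHConst s w * W Q) ^ s := by
      intro Q
      have h1 : (X Q) ^ ((1:ℝ)/s) * (W Q)⁻¹ ≤ RHConst s w :=
        le_iSup (fun Q : {S : Set (Fin d → ℝ) // IsCube S} =>
          (avgE Q.1 fun x => oR (w x ^ s)) ^ ((1:ℝ)/s) *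
          (avgE Q.1 fun x => oR (w x))⁻¹) Q
      have h2 : (X Q) ^ ((1:ℝ)/s) ≤ RHConst s w * W Q := by
        calc (X Q) ^ ((1:ℝ)/s) = (X Q) ^ ((1:ℝ)/s) * (W Q)⁻¹ * W Q := by
              rw [mul_assoc, ENNReal.inv_mul_cancel (hW0 Q) (hWt Q), mul_one]
          _ ≤ RHConst s w * W Q := mul_le_mul_left h1 _
      calc X Q = ((X Q) ^ ((1:ℝ)/s)) ^ s := by
            rw [← ENNReal.rpow_mul, one_div, inv_mul_cancel₀ hsne, ENNReal.rpow_one]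
        _ ≤ (RHConst s w * W Q) ^ s := ENNReal.rpow_le_rpow h2 hs0.le
    have hXfin : ∀ Q : Set (Fin d → ℝ), IsCube Q → avgE Q (fun x => oR (w x ^ s)) ≠ ⊤ := by
      intro Q hQ
      refine ne_top_of_le_ne_top ?_ (hXle ⟨Q, hQ⟩)
      exact (ENNReal.rpow_lt_top_of_nonneg hs0.le
        (ENNReal.mul_ne_top hR.ne (hWt ⟨Q, hQ⟩))).ne
    refine ⟨ApRH.isWeight_rpow hw hs0 hXfin, ?_⟩
    rw [hApP]
    have hbound : ∀ Q, X Q * (S' Q) ^ (p - 1)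
        ≤ (RHConst s w) ^ s * (ApConst q w) ^ s := by
      intro Q
      have hAq : W Q * (S' Q) ^ (q - 1) ≤ ApConst q w :=
        le_iSup (fun Q : {S : Set (Fin d → ℝ) // IsCube S} =>
          avgE Q.1 (fun x => oR (w x)) *
          (avgE Q.1 fun x => oR (w x ^ (-(1:ℝ) / (q - 1)))) ^ (q - 1)) Q
      calc X Q * (S' Q) ^ (p - 1)
          ≤ (RHConst s w * W Q) ^ s * (S' Q) ^ (p - 1) :=
            mul_le_mul_left (hXle Q) _
        _ = (RHConst s w) ^ s * (W Q * (S' Q) ^ (q-1)) ^ s := by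
            rw [ENNReal.mul_rpow_of_nonneg _ _ hs0.le,
              ENNReal.mul_rpow_of_nonneg (W Q) _ hs0.le, ← ENNReal.rpow_mul,
              hp1, show s * (q-1) = (q-1) * s by ring, mul_assoc]
        _ ≤ (RHConst s w) ^ s * (ApConst q w) ^ s :=
            mul_le_mul_right (ENNReal.rpow_le_rpow hAq hs0.le) _
    refine lt_of_le_of_lt (iSup_le hbound) ?_
    exact ENNReal.mul_lt_top (ENNReal.rpow_lt_top_of_nonneg hs0.le hR.ne)
      (ENNReal.rpow_lt_top_of_nonneg hs0.le hA.ne)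
  · rintro ⟨_, hP⟩
    rw [hApP] at hP
    have hPb : ∀ Q, X Q * (S' Q) ^ (p - 1) ≤ ⨆ Q, X Q * (S' Q) ^ (p - 1) :=
      fun Q => le_iSup (fun Q : {S : Set (Fin d → ℝ) // IsCube S} =>
        X Q * (S' Q) ^ (p - 1)) Q
    have hkey : ∀ Q, (X Q) ^ ((1:ℝ)/s) * (S' Q) ^ (q - 1)
        ≤ (⨆ Q, X Q * (S' Q) ^ (p - 1)) ^ ((1:ℝ)/s) := by
      intro Q
      calc (X Q) ^ ((1:ℝ)/s) * (S' Q) ^ (q - 1)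
          = (X Q * (S' Q) ^ (p - 1)) ^ ((1:ℝ)/s) := by
            rw [ENNReal.mul_rpow_of_nonneg _ _ (by positivity : (0:ℝ) ≤ 1/s),
              ← ENNReal.rpow_mul,
              show (p - 1) * ((1:ℝ)/s) = q - 1 by rw [hp1]; field_simp]
        _ ≤ (⨆ Q, X Q * (S' Q) ^ (p - 1)) ^ ((1:ℝ)/s) :=
            ENNReal.rpow_le_rpow (hPb Q) (by positivity)
    have hfin : (⨆ Q, X Q * (S' Q) ^ (p - 1)) ^ ((1:ℝ)/s) < ⊤ :=
      ENNReal.rpow_lt_top_of_nonneg (by positivity) hP.ne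
    constructor
    · refine ⟨hw, ?_⟩
      refine lt_of_le_of_lt (iSup_le fun Q => ?_) hfin
      calc W Q * (S' Q) ^ (q - 1) ≤ (X Q) ^ ((1:ℝ)/s) * (S' Q) ^ (q - 1) :=
            mul_le_mul_left (hJ Q) _
        _ ≤ _ := hkey Q
    · refine ⟨hw, ?_⟩
      refine lt_of_le_of_lt (iSup_le fun Q => ?_) hfin
      have hWinv : (W Q)⁻¹ ≤ (S' Q) ^ (q - 1) := by
        calc (W Q)⁻¹ = (W Q)⁻¹ * 1 := (mul_one _).symm
          _ ≤ (W Q)⁻¹ * (W Q * (S' Q) ^ (q - 1)) := mul_le_mul_right (hD Q) _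
          _ = (S' Q) ^ (q - 1) := by
              rw [← mul_assoc, ENNReal.inv_mul_cancel (hW0 Q) (hWt Q), one_mul]
      calc (X Q) ^ ((1:ℝ)/s) * (W Q)⁻¹ ≤ (X Q) ^ ((1:ℝ)/s) * (S' Q) ^ (q - 1) :=
            mul_le_mul_right hWinv _
        _ ≤ _ := hkey Q
end
end

section
/- If w ∈ A_p(ℝ^d) for some 1 < p < ∞, then there exists 1 < q < p such that w ∈ A_q(ℝ^d) (openness of the Muckenhoupt classes). -/
open MeasureTheory Filter Topology ENNReal NNReal
noncomputable section

open Set MeasureTheory Filter Topology ENNReal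

namespace ApOpen

variable {d : ℕ}

noncomputable def sl (r : ℝ) (n : ℕ) : ℝ := r / 2 ^ n

noncomputable def Dcl (a : Fin d → ℝ) (r : ℝ) (n : ℕ) (k : Fin d → ℤ) : Set (Fin d → ℝ) :=
  Set.univ.pi fun i => Set.Icc (a i + k i * sl r n) (a i + k i * sl r n + sl r n)

noncomputable def Dho (a : Fin d → ℝ) (r : ℝ) (n : ℕ) (k : Fin d → ℤ) : Set (Fin d → ℝ) :=
  Set.univ.pi fun i => Set.Ico (a i + k i * sl r n) (a i + k i * sl r n + sl r n)

noncomputable def J (a : Fin d → ℝ) (r : ℝ) (n : ℕ) (x : Fin d → ℝ) (i : Fin d) : ℤ :=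
  ⌊(x i - a i) / sl r n⌋

def G0 (a : Fin d → ℝ) (r : ℝ) : Set (Fin d → ℝ) :=
  Set.univ.pi fun i => Set.Ico (a i) (a i + r)

variable {a : Fin d → ℝ} {r : ℝ}

lemma sl_pos (hr : 0 < r) (n : ℕ) : 0 < sl r n := div_pos hr (by positivity)

lemma sl_mul_pow (n : ℕ) : (2:ℝ) ^ n * sl r n = r := by
  unfold sl; field_simp

lemma mem_Dho_iff (hr : 0 < r) {n : ℕ} {k : Fin d → ℤ} {x : Fin d → ℝ} :
    x ∈ Dho a r n k ↔ ∀ i, J a r n x i = k i := by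
  have hs := sl_pos hr n
  simp only [Dho, Set.mem_pi, Set.mem_univ, forall_true_left, Set.mem_Ico, J]
  refine forall_congr' fun i => ?_
  rw [Int.floor_eq_iff, le_div_iff₀ hs, div_lt_iff₀ hs]
  constructor <;> intro h <;> constructor <;> push_cast at * <;> nlinarith [h.1, h.2]

lemma mem_Dho_self (hr : 0 < r) (n : ℕ) (x : Fin d → ℝ) : x ∈ Dho a r n (J a r n x) :=
  (mem_Dho_iff hr).2 fun _ => rfl

lemma mem_G0_iff {x : Fin d → ℝ} : x ∈ G0 a r ↔ ∀ i, a i ≤ x i ∧ x i < a i + r := by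
  simp [G0]

lemma J_nonneg (hr : 0 < r) (n : ℕ) {x : Fin d → ℝ} (hx : x ∈ G0 a r) (i : Fin d) :
    0 ≤ J a r n x i :=
  Int.floor_nonneg.2 <| div_nonneg (sub_nonneg.2 ((mem_G0_iff.1 hx i).1)) (sl_pos hr n).le

lemma J_lt (hr : 0 < r) (n : ℕ) {x : Fin d → ℝ} (hx : x ∈ G0 a r) (i : Fin d) :
    J a r n x i < 2 ^ n := by
  have hs := sl_pos hr n
  refine Int.floor_lt.2 ?_
  rw [div_lt_iff₀ hs]
  have := (mem_G0_iff.1 hx i).2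
  push_cast
  nlinarith [sl_mul_pow (r := r) n]

lemma Dho_subset_G0 (hr : 0 < r) {n : ℕ} {k : Fin d → ℤ}
    (hk : ∀ i, 0 ≤ k i ∧ k i < 2 ^ n) : Dho a r n k ⊆ G0 a r := by
  intro x hx
  have hs := sl_pos hr n
  simp only [Dho, Set.mem_pi, Set.mem_univ, forall_true_left, Set.mem_Ico] at hx
  refine mem_G0_iff.2 fun i => ?_
  obtain ⟨h1, h2⟩ := hx i
  obtain ⟨hk1, hk2⟩ := hk i
  have hk2' : (k i : ℝ) + 1 ≤ (2:ℝ) ^ n := by exact_mod_cast hk2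
  have hk1' : (0:ℝ) ≤ (k i : ℝ) := by exact_mod_cast hk1
  constructor
  · nlinarith
  · nlinarith [sl_mul_pow (r := r) n]

lemma floor_div_pow {y : ℝ} (hy : 0 ≤ y) {N : ℤ} (hN : 0 < N) : ⌊y / N⌋ = ⌊y⌋ / N := by
  have h0 : 0 ≤ ⌊y⌋ := Int.floor_nonneg.2 hy
  have hNr : (0:ℝ) < (N:ℝ) := by exact_mod_cast hN
  have hdm := Int.mul_ediv_add_emod ⌊y⌋ N
  have hm0 : 0 ≤ ⌊y⌋ % N := Int.emod_nonneg _ hN.ne'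
  have hm1 : ⌊y⌋ % N < N := Int.emod_lt_of_pos _ hN
  have key1 : N * (⌊y⌋ / N) ≤ ⌊y⌋ := by omega
  have key2 : ⌊y⌋ < N * (⌊y⌋ / N) + N := by omega
  rw [Int.floor_eq_iff]
  constructor
  · rw [le_div_iff₀ hNr]
    calc ((⌊y⌋ / N : ℤ) : ℝ) * N = ((N * (⌊y⌋ / N) : ℤ) : ℝ) := by push_cast; ring
    _ ≤ (⌊y⌋ : ℝ) := by exact_mod_cast key1
    _ ≤ y := Int.floor_le y
  · rw [div_lt_iff₀ hNr]
    calc y < (⌊y⌋ : ℝ) + 1 := Int.lt_floor_add_one y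
    _ ≤ ((N * (⌊y⌋ / N) + N : ℤ) : ℝ) := by exact_mod_cast key2
    _ = ((⌊y⌋ / N : ℤ) + 1) * N := by push_cast; ring
lemma J_ancestor (hr : 0 < r) {m n : ℕ} (hmn : m ≤ n) {x : Fin d → ℝ} (hx : x ∈ G0 a r)
    (i : Fin d) : J a r m x i = J a r n x i / 2 ^ (n - m) := by
  have hsn := sl_pos hr n
  have hslm : sl r m = sl r n * 2 ^ (n - m) := by
    unfold sl
    rw [div_mul_eq_mul_div, div_eq_div_iff (by positivity) (by positivity)]
    rw [mul_assoc, ← pow_add]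
    congr 2
    omega
  have hy : 0 ≤ (x i - a i) / sl r n :=
    div_nonneg (sub_nonneg.2 ((mem_G0_iff.1 hx i).1)) hsn.le
  have hN : (0:ℤ) < 2 ^ (n - m) := by positivity
  unfold J
  rw [hslm, ← div_div]
  have := floor_div_pow hy hN
  rw [← this]
  norm_num

lemma par_valid {m n : ℕ} (hmn : m ≤ n) {k : Fin d → ℤ} (hk : ∀ i, 0 ≤ k i ∧ k i < 2 ^ n) :
    ∀ i, 0 ≤ k i / 2 ^ (n - m) ∧ k i / 2 ^ (n - m) < 2 ^ m := by
  intro i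
  obtain ⟨h1, h2⟩ := hk i
  have e : (2:ℤ) ^ n = 2 ^ (n - m) * 2 ^ m := by rw [← pow_add]; congr 1; omega
  have hN : (0:ℤ) < 2 ^ (n - m) := by positivity
  constructor
  · positivity
  · rw [Int.ediv_lt_iff_lt_mul hN]
    calc k i < 2 ^ n := h2
    _ = 2 ^ m * 2 ^ (n - m) := by rw [← pow_add]; congr 1; omega

lemma Dho_subset_ancestor (hr : 0 < r) {m n : ℕ} (hmn : m ≤ n) {k : Fin d → ℤ}
    (hk : ∀ i, 0 ≤ k i ∧ k i < 2 ^ n) :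
    Dho a r n k ⊆ Dho a r m (fun i => k i / 2 ^ (n - m)) := by
  intro x hx
  have hx0 : x ∈ G0 a r := Dho_subset_G0 hr hk hx
  rw [mem_Dho_iff hr] at hx ⊢
  intro i
  rw [J_ancestor hr hmn hx0 i, hx i]

lemma Dho_disjoint (hr : 0 < r) {n : ℕ} {k k' : Fin d → ℤ} (h : k ≠ k') :
    Disjoint (Dho a r n k) (Dho a r n k') := by
  rw [Set.disjoint_left]
  intro x hx hx'
  rw [mem_Dho_iff hr] at hx hx'
  exact h (funext fun i => (hx i).symm.trans (hx' i))

lemma measurableSet_Dcl {n : ℕ} {k : Fin d → ℤ} : MeasurableSet (Dcl a r n k) :=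
  MeasurableSet.univ_pi fun _ => measurableSet_Icc

lemma measurableSet_Dho {n : ℕ} {k : Fin d → ℤ} : MeasurableSet (Dho a r n k) :=
  MeasurableSet.univ_pi fun _ => measurableSet_Ico

lemma measurableSet_G0 : MeasurableSet (G0 a r) :=
  MeasurableSet.univ_pi fun _ => measurableSet_Ico

lemma Dho_subset_Dcl {n : ℕ} {k : Fin d → ℤ} : Dho a r n k ⊆ Dcl a r n k :=
  Set.pi_mono fun _ _ => Set.Ico_subset_Icc_self

lemma volume_Dcl (n : ℕ) (k : Fin d → ℤ) :
    volume (Dcl a r n k) = (ENNReal.ofReal (sl r n)) ^ d := by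
  rw [Dcl, volume_pi_pi]
  simp only [Real.volume_Icc, add_sub_cancel_left]
  rw [Finset.prod_const, Finset.card_univ, Fintype.card_fin]

lemma volume_Dho (n : ℕ) (k : Fin d → ℤ) :
    volume (Dho a r n k) = (ENNReal.ofReal (sl r n)) ^ d := by
  rw [Dho, volume_pi_pi]
  simp only [Real.volume_Ico, add_sub_cancel_left]
  rw [Finset.prod_const, Finset.card_univ, Fintype.card_fin]

lemma volume_Dcl_pos (hr : 0 < r) (n : ℕ) (k : Fin d → ℤ) : 0 < volume (Dcl a r n k) := by
  rw [volume_Dcl]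
  exact pos_iff_ne_zero.2 (pow_ne_zero d (ENNReal.ofReal_pos.2 (sl_pos hr n)).ne')

lemma volume_Dcl_ne_top (n : ℕ) (k : Fin d → ℤ) : volume (Dcl a r n k) ≠ ⊤ := by
  rw [volume_Dcl]
  exact (ENNReal.pow_lt_top ENNReal.ofReal_lt_top).ne

lemma Dho_ae_eq_Dcl (n : ℕ) (k : Fin d → ℤ) : Dho a r n k =ᵐ[volume] Dcl a r n k := by
  rw [MeasureTheory.ae_eq_set]
  constructor
  · rw [Set.diff_eq_empty.2 Dho_subset_Dcl]; simp
  · rw [measure_diff Dho_subset_Dcl measurableSet_Dho.nullMeasurableSet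
      (by rw [volume_Dho]; exact (ENNReal.pow_lt_top ENNReal.ofReal_lt_top).ne),
      volume_Dcl, volume_Dho, tsub_self]
noncomputable def Av (a : Fin d → ℝ) (r : ℝ) (g : (Fin d → ℝ) → ℝ≥0∞) (n : ℕ)
    (k : Fin d → ℤ) : ℝ≥0∞ :=
  (volume.withDensity g) (Dcl a r n k) / volume (Dcl a r n k)

def Sel (a : Fin d → ℝ) (r : ℝ) (g : (Fin d → ℝ) → ℝ≥0∞) (lam : ℝ≥0∞) :
    Set (ℕ × (Fin d → ℤ)) :=
  {q | (∀ i, 0 ≤ q.2 i ∧ q.2 i < 2 ^ q.1) ∧ lam < Av a r g q.1 q.2 ∧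
       ∀ m < q.1, Av a r g m (fun i => q.2 i / 2 ^ (q.1 - m)) ≤ lam}

def Om (a : Fin d → ℝ) (r : ℝ) (g : (Fin d → ℝ) → ℝ≥0∞) (lam : ℝ≥0∞) : Set (Fin d → ℝ) :=
  ⋃ q ∈ Sel a r g lam, Dho a r q.1 q.2

variable {g : (Fin d → ℝ) → ℝ≥0∞} {lam lam' : ℝ≥0∞}

lemma mem_Om_iff (hr : 0 < r) {x : Fin d → ℝ} :
    x ∈ Om a r g lam ↔ x ∈ G0 a r ∧ ∃ n, lam < Av a r g n (J a r n x) := by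
  constructor
  · rintro hx
    simp only [Om, Set.mem_iUnion] at hx
    obtain ⟨q, hq, hxq⟩ := hx
    have hJ := (mem_Dho_iff hr).1 hxq
    have hG : x ∈ G0 a r := Dho_subset_G0 hr hq.1 hxq
    refine ⟨hG, q.1, ?_⟩
    have : J a r q.1 x = q.2 := funext hJ
    rw [this]
    exact hq.2.1
  · rintro ⟨hG, hex⟩
    classical
    let n₀ := Nat.find hex
    have hspec : lam < Av a r g n₀ (J a r n₀ x) := Nat.find_spec hex
    refine Set.mem_iUnion.2 ⟨(n₀, J a r n₀ x), Set.mem_iUnion.2 ⟨?_, mem_Dho_self hr n₀ x⟩⟩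
    refine ⟨fun i => ⟨J_nonneg hr n₀ hG i, J_lt hr n₀ hG i⟩, hspec, fun m hm => ?_⟩
    have hpar : (fun i => J a r n₀ x i / 2 ^ (n₀ - m)) = J a r m x := by
      funext i
      exact (J_ancestor hr hm.le hG i).symm
    rw [hpar]
    exact not_lt.1 (Nat.find_min hex hm)

lemma Om_subset_G0 (hr : 0 < r) : Om a r g lam ⊆ G0 a r := by
  intro x hx
  exact ((mem_Om_iff hr).1 hx).1

lemma Om_antitone (hr : 0 < r) (h : lam ≤ lam') : Om a r g lam' ⊆ Om a r g lam := by
  intro x hx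
  rw [mem_Om_iff hr] at hx ⊢
  exact ⟨hx.1, hx.2.imp fun n hn => h.trans_lt hn⟩

lemma measurableSet_Om : MeasurableSet (Om a r g lam) :=
  MeasurableSet.biUnion (Set.to_countable _) fun _ _ => measurableSet_Dho

lemma sel_le_of_nonempty (hr : 0 < r) {q q' : ℕ × (Fin d → ℤ)}
    (hq : q ∈ Sel a r g lam) (hq' : q' ∈ Sel a r g lam') (hll : lam ≤ lam')
    {x : Fin d → ℝ} (hx : x ∈ Dho a r q.1 q.2) (hx' : x ∈ Dho a r q'.1 q'.2) :
    q.1 ≤ q'.1 := by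
  by_contra hlt
  push_neg at hlt
  have hG : x ∈ G0 a r := Dho_subset_G0 hr hq.1 hx
  have hJ := (mem_Dho_iff hr).1 hx
  have hJ' := (mem_Dho_iff hr).1 hx'
  have hpar : (fun i => q.2 i / 2 ^ (q.1 - q'.1)) = q'.2 := by
    funext i
    rw [← hJ i, ← hJ' i]
    exact (J_ancestor hr hlt.le hG i).symm
  have := hq.2.2 q'.1 hlt
  rw [hpar] at this
  exact absurd hq'.2.1 (not_lt.2 (this.trans hll))

lemma sel_subset_of_nonempty (hr : 0 < r) {q q' : ℕ × (Fin d → ℤ)}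
    (hq : q ∈ Sel a r g lam) (hq' : q' ∈ Sel a r g lam') (hll : lam ≤ lam')
    {x : Fin d → ℝ} (hx : x ∈ Dho a r q.1 q.2) (hx' : x ∈ Dho a r q'.1 q'.2) :
    Dho a r q'.1 q'.2 ⊆ Dho a r q.1 q.2 := by
  have hle := sel_le_of_nonempty hr hq hq' hll hx hx'
  have hG : x ∈ G0 a r := Dho_subset_G0 hr hq.1 hx
  have hJ := (mem_Dho_iff hr).1 hx
  have hJ' := (mem_Dho_iff hr).1 hx'
  have hpar : (fun i => q'.2 i / 2 ^ (q'.1 - q.1)) = q.2 := by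
    funext i
    rw [← hJ i, ← hJ' i]
    exact (J_ancestor hr hle hG i).symm
  have := Dho_subset_ancestor hr hle hq'.1 (a := a)
  rw [hpar] at this
  exact this

lemma sel_pairwise_disjoint (hr : 0 < r) :
    (Sel a r g lam).Pairwise (Function.onFun Disjoint fun q => Dho a r q.1 q.2) := by
  intro q hq q' hq' hne
  rw [Function.onFun, Set.disjoint_left]
  intro x hx hx'
  have h1 := sel_le_of_nonempty hr hq hq' le_rfl hx hx'
  have h2 := sel_le_of_nonempty hr hq' hq le_rfl hx' hx
  have hn : q.1 = q'.1 := le_antisymm h1 h2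
  have hJ := (mem_Dho_iff hr).1 hx
  have hJ' := (mem_Dho_iff hr).1 hx'
  apply hne
  have hk : q.2 = q'.2 := by
    funext i
    rw [← hJ i, ← hJ' i, hn]
  exact Prod.ext hn hk

lemma measure_Om (hr : 0 < r) (μ : Measure (Fin d → ℝ)) :
    μ (Om a r g lam) = ∑' q : Sel a r g lam, μ (Dho a r q.1.1 q.1.2) :=
  measure_biUnion (Set.to_countable _) (sel_pairwise_disjoint hr) fun _ _ => measurableSet_Dho
lemma G0_eq : G0 a r = Dho a r 0 0 := by
  unfold G0 Dho sl
  simp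

lemma nu_Dho_eq (n : ℕ) (k : Fin d → ℤ) :
    volume.withDensity g (Dho a r n k) = volume.withDensity g (Dcl a r n k) := by
  apply measure_congr
  exact (Dho_ae_eq_Dcl n k).filter_mono (withDensity_absolutelyContinuous volume g).ae_le

lemma nu_Dcl_eq_Av_mul (hr : 0 < r) (n : ℕ) (k : Fin d → ℤ) :
    volume.withDensity g (Dcl a r n k) = Av a r g n k * volume (Dcl a r n k) :=
  (ENNReal.div_mul_cancel (volume_Dcl_pos hr n k).ne' (volume_Dcl_ne_top n k)).symm

lemma volume_Dcl_succ (n : ℕ) (k k' : Fin d → ℤ) :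
    volume (Dcl a r n k) = 2 ^ d * volume (Dcl a r (n + 1) k') := by
  rw [volume_Dcl, volume_Dcl]
  have h2 : sl r n = 2 * sl r (n + 1) := by unfold sl; rw [pow_succ]; ring
  by_cases hs : 0 ≤ sl r (n + 1)
  · rw [h2, ENNReal.ofReal_mul (by norm_num), mul_pow]
    norm_num
  · push_neg at hs
    rw [ENNReal.ofReal_eq_zero.2 (by linarith), ENNReal.ofReal_eq_zero.2 hs.le]
    rcases Nat.eq_zero_or_pos d with hd | hd
    · simp [hd]
    · rw [zero_pow hd.ne', mul_zero]

lemma isCube_Dcl (hr : 0 < r) (n : ℕ) (k : Fin d → ℤ) : IsCube (Dcl a r n k) :=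
  ⟨fun i => a i + k i * sl r n, sl r n, sl_pos hr n, rfl⟩

lemma sel_fst_pos {q : ℕ × (Fin d → ℤ)} (hroot : Av a r g 0 0 ≤ lam)
    (hq : q ∈ Sel a r g lam) : 0 < q.1 := by
  rcases Nat.eq_zero_or_pos q.1 with h0 | h
  · exfalso
    have hk : q.2 = 0 := by
      funext i
      have := hq.1 i
      rw [h0] at this
      simp only [Pi.zero_apply]
      omega
    have := hq.2.1
    rw [h0, hk] at this
    exact absurd hroot (not_le.2 this)
  · exact h

lemma nu_sel_le (hr : 0 < r) {q : ℕ × (Fin d → ℤ)} (hroot : Av a r g 0 0 ≤ lam)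
    (hq : q ∈ Sel a r g lam) :
    volume.withDensity g (Dcl a r q.1 q.2) ≤ 2 ^ d * lam * volume (Dcl a r q.1 q.2) := by
  obtain ⟨n, hn⟩ : ∃ n, q.1 = n + 1 := ⟨q.1 - 1, by have := sel_fst_pos hroot hq; omega⟩
  have hpar_le : Av a r g n (fun i => q.2 i / 2 ^ (q.1 - n)) ≤ lam := hq.2.2 n (by omega)
  have hsub : Dho a r q.1 q.2 ⊆ Dho a r n (fun i => q.2 i / 2 ^ (q.1 - n)) :=
    Dho_subset_ancestor hr (by omega) hq.1
  calc volume.withDensity g (Dcl a r q.1 q.2)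
      = volume.withDensity g (Dho a r q.1 q.2) := (nu_Dho_eq _ _).symm
    _ ≤ volume.withDensity g (Dho a r n (fun i => q.2 i / 2 ^ (q.1 - n))) :=
        measure_mono hsub
    _ = volume.withDensity g (Dcl a r n (fun i => q.2 i / 2 ^ (q.1 - n))) := nu_Dho_eq _ _
    _ = Av a r g n (fun i => q.2 i / 2 ^ (q.1 - n)) *
        volume (Dcl a r n (fun i => q.2 i / 2 ^ (q.1 - n))) := nu_Dcl_eq_Av_mul hr _ _
    _ ≤ lam * volume (Dcl a r n (fun i => q.2 i / 2 ^ (q.1 - n))) := by gcongr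
    _ = lam * (2 ^ d * volume (Dcl a r (n + 1) q.2)) := by rw [volume_Dcl_succ n]
    _ = 2 ^ d * lam * volume (Dcl a r (n + 1) q.2) := by ring
    _ = 2 ^ d * lam * volume (Dcl a r q.1 q.2) := by rw [← hn]

lemma lam_mul_vol_le_nu (hr : 0 < r) {q : ℕ × (Fin d → ℤ)} (hq : q ∈ Sel a r g lam) :
    lam * volume (Dcl a r q.1 q.2) ≤ volume.withDensity g (Dcl a r q.1 q.2) := by
  have h := hq.2.1
  rw [Av] at h
  exact (ENNReal.le_div_iff_mul_le (Or.inl (volume_Dcl_pos hr _ _).ne')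
    (Or.inl (volume_Dcl_ne_top _ _))).1 h.le

lemma lam_mul_volume_Om_le (hr : 0 < r) :
    lam * volume (Om a r g lam) ≤ volume.withDensity g (Om a r g lam) := by
  rw [measure_Om hr volume, measure_Om hr (volume.withDensity g), ← ENNReal.tsum_mul_left]
  refine ENNReal.tsum_le_tsum fun q => ?_
  rw [nu_Dho_eq, volume_Dho, ← volume_Dcl]
  exact lam_mul_vol_le_nu hr q.2

lemma Om_inter_component (hr : 0 < r) (hll : lam ≤ lam') {q : ℕ × (Fin d → ℤ)}
    (hq : q ∈ Sel a r g lam) :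
    Om a r g lam' ∩ Dho a r q.1 q.2 =
      ⋃ q' ∈ {q' ∈ Sel a r g lam' | Dho a r q'.1 q'.2 ⊆ Dho a r q.1 q.2},
        Dho a r q'.1 q'.2 := by
  ext x
  simp only [Set.mem_inter_iff, Set.mem_iUnion, Set.mem_setOf_eq, exists_prop]
  constructor
  · rintro ⟨hO, hD⟩
    simp only [Om, Set.mem_iUnion, exists_prop] at hO
    obtain ⟨q', hq', hxq'⟩ := hO
    exact ⟨q', ⟨hq', sel_subset_of_nonempty hr hq hq' hll hD hxq'⟩, hxq'⟩
  · rintro ⟨q', ⟨hq', hsub⟩, hxq'⟩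
    exact ⟨Set.mem_biUnion hq' hxq', hsub hxq'⟩

lemma measure_Om_inter (hr : 0 < r) (hll : lam ≤ lam') {q : ℕ × (Fin d → ℤ)}
    (hq : q ∈ Sel a r g lam) (μ : Measure (Fin d → ℝ)) :
    μ (Om a r g lam' ∩ Dho a r q.1 q.2) =
      ∑' q' : {q' ∈ Sel a r g lam' | Dho a r q'.1 q'.2 ⊆ Dho a r q.1 q.2},
        μ (Dho a r q'.1.1 q'.1.2) := by
  rw [Om_inter_component hr hll hq]
  exact measure_biUnion (Set.to_countable _)
    ((sel_pairwise_disjoint hr).mono (Set.sep_subset _ _)) fun _ _ => measurableSet_Dho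

lemma volume_Om_inter_le (hr : 0 < r) (hroot : Av a r g 0 0 ≤ lam)
    {q : ℕ × (Fin d → ℤ)} (hq : q ∈ Sel a r g lam) :
    2 ^ (d + 1) * lam * volume (Om a r g (2 ^ (d + 1) * lam) ∩ Dho a r q.1 q.2) ≤
      2 ^ d * lam * volume (Dcl a r q.1 q.2) := by
  set lam' := (2 : ℝ≥0∞) ^ (d + 1) * lam with hlam'
  have hll : lam ≤ lam' := le_mul_of_one_le_left zero_le (one_le_pow_of_one_le' one_le_two _)
  calc lam' * volume (Om a r g lam' ∩ Dho a r q.1 q.2)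
      = lam' * ∑' q' : {q' ∈ Sel a r g lam' | Dho a r q'.1 q'.2 ⊆ Dho a r q.1 q.2},
          volume (Dho a r q'.1.1 q'.1.2) := by rw [measure_Om_inter hr hll hq]
    _ = ∑' q' : {q' ∈ Sel a r g lam' | Dho a r q'.1 q'.2 ⊆ Dho a r q.1 q.2},
          lam' * volume (Dho a r q'.1.1 q'.1.2) := ENNReal.tsum_mul_left.symm
    _ ≤ ∑' q' : {q' ∈ Sel a r g lam' | Dho a r q'.1 q'.2 ⊆ Dho a r q.1 q.2},
          volume.withDensity g (Dho a r q'.1.1 q'.1.2) := by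
        refine ENNReal.tsum_le_tsum fun q' => ?_
        rw [nu_Dho_eq, volume_Dho, ← volume_Dcl]
        exact lam_mul_vol_le_nu hr q'.2.1
    _ = volume.withDensity g (Om a r g lam' ∩ Dho a r q.1 q.2) :=
        (measure_Om_inter hr hll hq _).symm
    _ ≤ volume.withDensity g (Dho a r q.1 q.2) := measure_mono Set.inter_subset_right
    _ = volume.withDensity g (Dcl a r q.1 q.2) := nu_Dho_eq _ _
    _ ≤ 2 ^ d * lam * volume (Dcl a r q.1 q.2) := nu_sel_le hr hroot hq

lemma two_volume_Om_inter_le (hr : 0 < r) (hroot : Av a r g 0 0 ≤ lam)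
    (hlam0 : lam ≠ 0) (hlamt : lam ≠ ⊤) {q : ℕ × (Fin d → ℤ)} (hq : q ∈ Sel a r g lam) :
    2 * volume (Om a r g (2 ^ (d + 1) * lam) ∩ Dho a r q.1 q.2) ≤
      volume (Dcl a r q.1 q.2) := by
  have h := volume_Om_inter_le hr hroot hq
  have hc0 : (2 : ℝ≥0∞) ^ d * lam ≠ 0 := by
    simp [hlam0]
  have hct : (2 : ℝ≥0∞) ^ d * lam ≠ ⊤ := by
    exact ENNReal.mul_ne_top (by simp [ENNReal.pow_ne_top]) hlamt
  rw [← ENNReal.mul_le_mul_iff_right hc0 hct]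
  calc 2 ^ d * lam * (2 * volume (Om a r g (2 ^ (d + 1) * lam) ∩ Dho a r q.1 q.2))
      = 2 ^ (d + 1) * lam * volume (Om a r g (2 ^ (d + 1) * lam) ∩ Dho a r q.1 q.2) := by
        rw [pow_succ]; ring
    _ ≤ 2 ^ d * lam * volume (Dcl a r q.1 q.2) := h

lemma nu_Om_step {β : ℝ≥0∞} (hr : 0 < r) (hroot : Av a r g 0 0 ≤ lam)
    (hlam0 : lam ≠ 0) (hlamt : lam ≠ ⊤)
    (hsm : ∀ Q : Set (Fin d → ℝ), IsCube Q → ∀ E ⊆ Q, MeasurableSet E →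
      2 * volume E ≤ volume Q → volume.withDensity g E ≤ β * volume.withDensity g Q) :
    volume.withDensity g (Om a r g (2 ^ (d + 1) * lam)) ≤
      β * volume.withDensity g (Om a r g lam) := by
  set lam' := (2 : ℝ≥0∞) ^ (d + 1) * lam with hlam'
  have hll : lam ≤ lam' := le_mul_of_one_le_left zero_le (one_le_pow_of_one_le' one_le_two _)
  have hOsub : Om a r g lam' ⊆ Om a r g lam := Om_antitone hr hll
  have hdecomp : Om a r g lam' = ⋃ q ∈ Sel a r g lam, Om a r g lam' ∩ Dho a r q.1 q.2 := by
    rw [← Set.inter_iUnion₂]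
    rw [show (⋃ q ∈ Sel a r g lam, Dho a r q.1 q.2) = Om a r g lam from rfl]
    rw [Set.inter_eq_self_of_subset_left hOsub]
  calc volume.withDensity g (Om a r g lam')
      = ∑' q : Sel a r g lam, volume.withDensity g (Om a r g lam' ∩ Dho a r q.1.1 q.1.2) := by
        conv_lhs => rw [hdecomp]
        exact measure_biUnion (s := Sel a r g lam) (Set.to_countable _)
          (fun q hq q' hq' hne => ((sel_pairwise_disjoint hr) hq hq' hne).mono
            Set.inter_subset_right Set.inter_subset_right)
          fun q hq => measurableSet_Om.inter measurableSet_Dho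
    _ ≤ ∑' q : Sel a r g lam, β * volume.withDensity g (Dcl a r q.1.1 q.1.2) := by
        refine ENNReal.tsum_le_tsum fun q => ?_
        exact hsm (Dcl a r q.1.1 q.1.2) (isCube_Dcl hr _ _)
          (Om a r g lam' ∩ Dho a r q.1.1 q.1.2)
          (Set.inter_subset_right.trans Dho_subset_Dcl)
          (measurableSet_Om.inter measurableSet_Dho)
          (two_volume_Om_inter_le hr hroot hlam0 hlamt q.2)
    _ = ∑' q : Sel a r g lam, β * volume.withDensity g (Dho a r q.1.1 q.1.2) := by
        refine tsum_congr fun q => ?_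
        rw [nu_Dho_eq]
    _ = β * volume.withDensity g (Om a r g lam) := by
        rw [ENNReal.tsum_mul_left, measure_Om hr]


lemma volume_closedBall_pi (x : Fin d → ℝ) {ρ : ℝ} (hρ : 0 ≤ ρ) :
    volume (Metric.closedBall x ρ) = ENNReal.ofReal (2 * ρ) ^ d := by
  rw [closedBall_pi x hρ]
  have : ∀ i : Fin d, Metric.closedBall (x i) ρ = Set.Icc (x i - ρ) (x i + ρ) :=
    fun i => Real.closedBall_eq_Icc
  simp only [this]
  rw [volume_pi_pi]
  simp only [Real.volume_Icc, show ∀ i : Fin d, x i + ρ - (x i - ρ) = 2 * ρ from fun i => by ring]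
  rw [Finset.prod_const, Finset.card_univ, Fintype.card_fin]

noncomputable def vfam (d : ℕ) : VitaliFamily (volume : Measure (Fin d → ℝ)) := by
  refine Vitali.vitaliFamily volume (6 ^ d) fun x => ?_
  refine Filter.Eventually.frequently ?_
  filter_upwards [self_mem_nhdsWithin] with ρ (hρ : ρ ∈ Set.Ioi (0:ℝ))
  have hρ0 : (0:ℝ) ≤ ρ := le_of_lt hρ
  rw [volume_closedBall_pi x (by linarith), volume_closedBall_pi x hρ0]
  have h6 : ENNReal.ofReal (2 * (3 * ρ)) = 3 * ENNReal.ofReal (2 * ρ) := by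
    rw [show (2:ℝ) * (3 * ρ) = 3 * (2 * ρ) by ring, ENNReal.ofReal_mul (by norm_num)]
    norm_num
  rw [h6, mul_pow, show ((6 ^ d : ℝ≥0) : ℝ≥0∞) = 6 ^ d by push_cast; ring]
  gcongr
  norm_num

lemma vfam_setsAt (x : Fin d → ℝ) :
    (vfam d).setsAt x = { s | IsClosed s ∧ (interior s).Nonempty ∧
      ∃ ρ, s ⊆ Metric.closedBall x ρ ∧
        volume (Metric.closedBall x (3 * ρ)) ≤ (6 ^ d : ℝ≥0) * volume s } := rfl

lemma Dcl_mem_setsAt (hr : 0 < r) (n : ℕ) (x : Fin d → ℝ) :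
    Dcl a r n (J a r n x) ∈ (vfam d).setsAt x := by
  have hs := sl_pos hr n
  rw [vfam_setsAt]
  refine ⟨isClosed_set_pi fun i _ => isClosed_Icc, ?_, sl r n, ?_, ?_⟩
  · refine ⟨fun i => a i + J a r n x i * sl r n + sl r n / 2, ?_⟩
    have hopen : IsOpen (Set.univ.pi fun i : Fin d =>
        Set.Ioo (a i + J a r n x i * sl r n) (a i + J a r n x i * sl r n + sl r n)) :=
      isOpen_set_pi Set.finite_univ fun i _ => isOpen_Ioo
    refine interior_maximal (Set.pi_mono fun i _ => Set.Ioo_subset_Icc_self) hopen ?_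
    refine Set.mem_univ_pi.2 fun i => ?_
    constructor <;> [linarith; linarith]
  · intro y hy
    have hx : x ∈ Dcl a r n (J a r n x) := Dho_subset_Dcl (mem_Dho_self hr n x)
    rw [Metric.mem_closedBall]
    refine dist_pi_le_iff hs.le |>.2 fun i => ?_
    have h1 := hy i (Set.mem_univ i)
    have h2 := hx i (Set.mem_univ i)
    have := Real.dist_le_of_mem_Icc h1 h2
    simpa using this
  · rw [volume_closedBall_pi x (by linarith), volume_Dcl]
    have h6 : ENNReal.ofReal (2 * (3 * sl r n)) = 6 * ENNReal.ofReal (sl r n) := by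
      rw [show (2:ℝ) * (3 * sl r n) = 6 * sl r n by ring, ENNReal.ofReal_mul (by norm_num)]
      norm_num
    rw [h6, mul_pow, show ((6 ^ d : ℝ≥0) : ℝ≥0∞) = 6 ^ d by push_cast; ring]

lemma tendsto_Dcl_filterAt (hr : 0 < r) (x : Fin d → ℝ) :
    Tendsto (fun n => Dcl a r n (J a r n x)) atTop ((vfam d).filterAt x) := by
  rw [VitaliFamily.tendsto_filterAt_iff]
  constructor
  · exact Filter.Eventually.of_forall fun n => Dcl_mem_setsAt hr n x
  · intro ε hε
    have hsl : Tendsto (fun n => sl r n) atTop (𝓝 0) := by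
      have h := tendsto_pow_atTop_nhds_zero_of_lt_one
        (by norm_num : (0:ℝ) ≤ 1/2) (by norm_num : (1/2:ℝ) < 1)
      have h2 := h.const_mul r
      rw [mul_zero] at h2
      convert h2 using 2 with n
      unfold sl
      rw [div_pow, one_pow]
      ring
    filter_upwards [hsl.eventually (ge_mem_nhds hε)] with n hn
    intro y hy
    have hx : x ∈ Dcl a r n (J a r n x) := Dho_subset_Dcl (mem_Dho_self hr n x)
    rw [Metric.mem_closedBall]
    refine le_trans (dist_pi_le_iff (sl_pos hr n).le |>.2 fun i => ?_) hn
    have := Real.dist_le_of_mem_Icc (hy i (Set.mem_univ i)) (hx i (Set.mem_univ i))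
    simpa using this

lemma locallyFinite_withDensity (hg : Measurable g)
    (hfin : ∀ Q : Set (Fin d → ℝ), IsCube Q → volume.withDensity g Q < ⊤) :
    IsLocallyFiniteMeasure (volume.withDensity g) := by
  constructor
  intro x
  refine ⟨Set.univ.pi fun i => Set.Icc (x i - 1) (x i + 1), ?_, ?_⟩
  · refine set_pi_mem_nhds Set.finite_univ fun i _ => Icc_mem_nhds (by linarith) (by linarith)
  · have he : (Set.univ.pi fun i => Set.Icc (x i - 1) (x i + 1)) =
        Set.univ.pi fun i => Set.Icc (x i - 1) ((x i - 1) + 2) := by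
      have h : ∀ y : ℝ, y - 1 + 2 = y + 1 := fun y => by ring
      simp [h]
    rw [he]
    exact hfin _ ⟨fun i => x i - 1, 2, by norm_num, rfl⟩

lemma ae_le_off_Om (hr : 0 < r) (hg : Measurable g)
    (hfin : ∀ Q : Set (Fin d → ℝ), IsCube Q → volume.withDensity g Q < ⊤) (lam : ℝ≥0∞) :
    ∀ᵐ x ∂(volume : Measure (Fin d → ℝ)),
      x ∈ G0 a r \ Om a r g lam → g x ≤ lam := by
  haveI := locallyFinite_withDensity hg hfin
  have hrn : (volume.withDensity g).rnDeriv volume =ᵐ[volume] g :=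
    Measure.rnDeriv_withDensity volume hg
  filter_upwards [(vfam d).ae_tendsto_rnDeriv (volume.withDensity g), hrn] with x hx hx2
  rintro ⟨hxG, hxO⟩
  have htd : Tendsto (fun n => volume.withDensity g (Dcl a r n (J a r n x)) /
      volume (Dcl a r n (J a r n x))) atTop (𝓝 (g x)) := by
    rw [← hx2]
    exact hx.comp (tendsto_Dcl_filterAt hr x)
  refine le_of_tendsto' htd fun n => ?_
  have : ¬(x ∈ G0 a r ∧ ∃ m, lam < Av a r g m (J a r m x)) := fun h => hxO ((mem_Om_iff hr).2 h)
  push_neg at this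
  exact this hxG n


lemma pow_rpow_comm (X : ℝ≥0∞) (n : ℕ) (e : ℝ) : (X ^ n) ^ e = (X ^ e) ^ n := by
  rw [← ENNReal.rpow_natCast X n, ← ENNReal.rpow_mul, mul_comm, ENNReal.rpow_mul,
    ENNReal.rpow_natCast]

lemma setLIntegral_rpow_le (hg : Measurable g) {S : Set (Fin d → ℝ)} (hS : MeasurableSet S)
    {L : ℝ≥0∞} (hL : L ≠ ⊤) {ε : ℝ} (hε : 0 < ε)
    (h : ∀ᵐ x ∂(volume : Measure (Fin d → ℝ)), x ∈ S → g x ≤ L) :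
    ∫⁻ x in S, g x ^ (1 + ε) ∂volume ≤ L ^ ε * volume.withDensity g S := by
  rw [withDensity_apply g hS, ← lintegral_const_mul _ hg]
  refine lintegral_mono_ae ?_
  filter_upwards [ae_restrict_of_ae h, ae_restrict_mem hS] with x hx hxS
  have hgx : g x ≤ L := hx hxS
  by_cases hx0 : g x = 0
  · rw [hx0, ENNReal.zero_rpow_of_pos (by linarith)]
    exact zero_le
  · have hxt : g x ≠ ⊤ := (hgx.trans_lt hL.lt_top).ne
    rw [show (1 : ℝ) + ε = ε + 1 by ring, ENNReal.rpow_add _ _ hx0 hxt, ENNReal.rpow_one]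
    exact mul_le_mul_left (ENNReal.rpow_le_rpow hgx hε.le) _

theorem RHI_cube (hr : 0 < r) {β : ℝ≥0∞} (hβu : β < 1) (hg : Measurable g)
    (hfin : ∀ Q : Set (Fin d → ℝ), IsCube Q → volume.withDensity g Q < ⊤)
    (hpos : ∀ Q : Set (Fin d → ℝ), IsCube Q → 0 < volume.withDensity g Q)
    (hsm : ∀ Q : Set (Fin d → ℝ), IsCube Q → ∀ E ⊆ Q, MeasurableSet E →
      2 * volume E ≤ volume Q → volume.withDensity g E ≤ β * volume.withDensity g Q)
    {ε : ℝ} (hε : 0 < ε) (hc : ((2:ℝ≥0∞) ^ (d+1)) ^ ε * β < 1) :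
    ∫⁻ x in Dcl a r 0 0, g x ^ (1 + ε) ∂volume ≤
      (1 + ((2:ℝ≥0∞) ^ (d+1)) ^ ε * (1 - ((2:ℝ≥0∞) ^ (d+1)) ^ ε * β)⁻¹) *
        (Av a r g 0 0) ^ ε * volume.withDensity g (Dcl a r 0 0) := by
  classical
  set ν := volume.withDensity g with hν
  set Q : Set (Fin d → ℝ) := Dcl a r 0 0 with hQ
  have hQcube : IsCube Q := isCube_Dcl hr 0 0
  have hνQtop : ν Q < ⊤ := hfin Q hQcube
  have hνQpos : 0 < ν Q := hpos Q hQcube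
  set A0 : ℝ≥0∞ := Av a r g 0 0 with hA0
  have hA0pos : 0 < A0 := ENNReal.div_pos hνQpos.ne' (volume_Dcl_ne_top 0 0)
  have hA0top : A0 < ⊤ := ENNReal.div_lt_top hνQtop.ne (volume_Dcl_pos hr 0 0).ne'
  set X : ℝ≥0∞ := (2:ℝ≥0∞) ^ (d+1) with hX
  have hX1 : 1 ≤ X := one_le_pow_of_one_le' one_le_two _
  have hX0 : X ≠ 0 := by positivity
  have hXt : X ≠ ⊤ := by
    rw [hX]
    exact ENNReal.pow_ne_top (by norm_num)
  set lam : ℕ → ℝ≥0∞ := fun j => X ^ j * A0 with hlam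
  have hlam0 : ∀ j, lam j ≠ 0 := fun j => by
    simp only [hlam, ne_eq, mul_eq_zero, not_or]
    exact ⟨pow_ne_zero _ hX0, hA0pos.ne'⟩
  have hlamt : ∀ j, lam j ≠ ⊤ := fun j =>
    ENNReal.mul_ne_top (ENNReal.pow_ne_top hXt) hA0top.ne
  have hroot : ∀ j, Av a r g 0 0 ≤ lam j := fun j =>
    le_mul_of_one_le_left zero_le (one_le_pow_of_one_le' hX1 _)
  have hlamsucc : ∀ j, lam (j + 1) = 2 ^ (d + 1) * lam j := fun j => by
    simp only [hlam, pow_succ, hX]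
    ring
  have hOmsubQ : ∀ j, Om a r g (lam j) ⊆ Q := fun j =>
    (Om_subset_G0 hr).trans (by rw [G0_eq]; exact Dho_subset_Dcl)
  -- geometric decay of ν (Om (lam j))
  have hdecay : ∀ j, ν (Om a r g (lam j)) ≤ β ^ j * ν Q := by
    intro j
    induction j with
    | zero => simpa using measure_mono (hOmsubQ 0)
    | succ j ih =>
      have hstep := nu_Om_step (β := β) hr (hroot j) (hlam0 j) (hlamt j) hsm
      rw [← hlamsucc j] at hstep
      calc ν (Om a r g (lam (j+1))) ≤ β * ν (Om a r g (lam j)) := hstep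
        _ ≤ β * (β ^ j * ν Q) := by gcongr
        _ = β ^ (j+1) * ν Q := by ring
  -- the intersection is null
  have hN : volume (⋂ j, Om a r g (lam j)) = 0 := by
    have hle : ∀ j, volume (⋂ j, Om a r g (lam j)) ≤ (ν Q / A0) * (X⁻¹) ^ j := by
      intro j
      have h1 : volume (⋂ j, Om a r g (lam j)) ≤ volume (Om a r g (lam j)) :=
        measure_mono (Set.iInter_subset _ j)
      have h2 : lam j * volume (Om a r g (lam j)) ≤ ν (Om a r g (lam j)) :=
        lam_mul_volume_Om_le hr
      have h3 : volume (Om a r g (lam j)) ≤ ν Q / lam j := by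
        rw [ENNReal.le_div_iff_mul_le (Or.inl (hlam0 j)) (Or.inl (hlamt j))]
        rw [mul_comm]
        exact h2.trans (measure_mono (hOmsubQ j))
      refine h1.trans (h3.trans ?_)
      rw [hlam, ENNReal.div_eq_inv_mul, ENNReal.mul_inv (Or.inl (pow_ne_zero _ hX0))
        (Or.inl (ENNReal.pow_ne_top hXt)), ENNReal.inv_pow, ENNReal.div_eq_inv_mul]
      ring_nf
      exact le_refl _
    have htend : Tendsto (fun j => (ν Q / A0) * (X⁻¹) ^ j) atTop (𝓝 0) := by
      have hgeo : Tendsto (fun j : ℕ => (X⁻¹) ^ j) atTop (𝓝 0) :=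
        ENNReal.tendsto_pow_atTop_nhds_zero_of_lt_one (by
          rw [ENNReal.inv_lt_one]
          exact lt_of_lt_of_le one_lt_two (le_self_pow one_le_two (Nat.succ_ne_zero d)))
      have := ENNReal.Tendsto.const_mul hgeo (Or.inr
        (ENNReal.div_lt_top hνQtop.ne hA0pos.ne').ne)
      simpa using this
    exact le_antisymm (ge_of_tendsto' htend hle) zero_le
  -- decomposition of G0
  set U : ℕ → Set (Fin d → ℝ) := fun j => Om a r g (lam j) \ Om a r g (lam (j+1)) with hU
  have hcover : G0 a r ⊆ ((G0 a r \ Om a r g (lam 0)) ∪ ⋃ j, U j) ∪ ⋂ j, Om a r g (lam j) := by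
    intro x hx
    by_cases hall : ∀ j, x ∈ Om a r g (lam j)
    · exact Or.inr (Set.mem_iInter.2 hall)
    · push_neg at hall
      refine Or.inl ?_
      have hex : ∃ j, x ∉ Om a r g (lam j) := hall
      have hspec : x ∉ Om a r g (lam (Nat.find hex)) := Nat.find_spec hex
      rcases Nat.eq_zero_or_pos (Nat.find hex) with h0 | hpos'
      · rw [h0] at hspec
        exact Or.inl ⟨hx, hspec⟩
      · refine Or.inr (Set.mem_iUnion.2 ⟨Nat.find hex - 1, ?_⟩)
        have hmem : x ∈ Om a r g (lam (Nat.find hex - 1)) := by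
          by_contra hcon
          exact absurd (Nat.find_min' hex hcon) (by omega)
        have heq : Nat.find hex - 1 + 1 = Nat.find hex := by omega
        exact ⟨hmem, by rw [heq]; exact hspec⟩
  have hQae : (Q : Set (Fin d → ℝ)) =ᵐ[(volume : Measure (Fin d → ℝ))] G0 a r := by
    rw [G0_eq]
    exact (Dho_ae_eq_Dcl 0 0).symm
  have hlam0eq : lam 0 ^ ε = A0 ^ ε := by
    simp [hlam]
  calc ∫⁻ x in Q, g x ^ (1 + ε) ∂volume
      = ∫⁻ x in G0 a r, g x ^ (1 + ε) ∂volume := setLIntegral_congr hQae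
    _ ≤ ∫⁻ x in ((G0 a r \ Om a r g (lam 0)) ∪ ⋃ j, U j) ∪ ⋂ j, Om a r g (lam j),
          g x ^ (1+ε) ∂volume := lintegral_mono_set hcover
    _ ≤ (∫⁻ x in (G0 a r \ Om a r g (lam 0)) ∪ ⋃ j, U j, g x ^ (1+ε) ∂volume) +
          ∫⁻ x in ⋂ j, Om a r g (lam j), g x ^ (1+ε) ∂volume := lintegral_union_le _ _ _
    _ = ∫⁻ x in (G0 a r \ Om a r g (lam 0)) ∪ ⋃ j, U j, g x ^ (1+ε) ∂volume := by
        rw [setLIntegral_measure_zero _ _ hN, add_zero]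
    _ ≤ (∫⁻ x in G0 a r \ Om a r g (lam 0), g x ^ (1+ε) ∂volume) +
          ∫⁻ x in ⋃ j, U j, g x ^ (1+ε) ∂volume := lintegral_union_le _ _ _
    _ ≤ (∫⁻ x in G0 a r \ Om a r g (lam 0), g x ^ (1+ε) ∂volume) +
          ∑' j, ∫⁻ x in U j, g x ^ (1+ε) ∂volume := by
        gcongr
        exact lintegral_iUnion_le _ _
    _ ≤ lam 0 ^ ε * ν Q + ∑' j, lam (j+1) ^ ε * (β ^ j * ν Q) := by
        refine add_le_add ?_ (ENNReal.tsum_le_tsum fun j => ?_)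
        · refine (setLIntegral_rpow_le hg (measurableSet_G0.diff measurableSet_Om)
            (hlamt 0) hε (ae_le_off_Om hr hg hfin (lam 0))).trans ?_
          refine mul_le_mul_right (measure_mono (Set.diff_subset.trans ?_)) _
          rw [G0_eq]
          exact Dho_subset_Dcl
        · refine (setLIntegral_rpow_le hg (measurableSet_Om.diff measurableSet_Om)
            (hlamt (j+1)) hε ?_).trans ?_
          · filter_upwards [ae_le_off_Om hr hg hfin (lam (j+1))] with x hx hxU
            exact hx ⟨Om_subset_G0 hr hxU.1, hxU.2⟩
          · exact mul_le_mul_right ((measure_mono Set.diff_subset).trans (hdecay j)) _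
    _ = A0 ^ ε * ν Q + (X ^ ε * (A0 ^ ε * ν Q)) * ∑' j, (X ^ ε * β) ^ j := by
        rw [hlam0eq]
        congr 1
        calc ∑' j, lam (j+1) ^ ε * (β ^ j * ν Q)
            = ∑' j, (X ^ ε * (A0 ^ ε * ν Q)) * (X ^ ε * β) ^ j := by
              refine tsum_congr fun j => ?_
              rw [hlam]
              simp only []
              rw [ENNReal.mul_rpow_of_nonneg _ _ hε.le, pow_rpow_comm]
              ring
          _ = (X ^ ε * (A0 ^ ε * ν Q)) * ∑' j, (X ^ ε * β) ^ j := ENNReal.tsum_mul_left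
    _ = (1 + X ^ ε * (1 - X ^ ε * β)⁻¹) * A0 ^ ε * ν Q := by
        rw [ENNReal.tsum_geometric]
        ring


lemma cube_facts {Q : Set (Fin d → ℝ)} (hQ : IsCube Q) :
    MeasurableSet Q ∧ 0 < volume Q ∧ volume Q ≠ ⊤ := by
  obtain ⟨b, ρ, hρ, rfl⟩ := hQ
  refine ⟨MeasurableSet.univ_pi fun _ => measurableSet_Icc, ?_, ?_⟩
  · rw [volume_pi_pi]
    simp only [Real.volume_Icc, add_sub_cancel_left]
    rw [Finset.prod_const, Finset.card_univ, Fintype.card_fin]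
    exact pos_iff_ne_zero.2 (pow_ne_zero _ (ENNReal.ofReal_pos.2 hρ).ne')
  · rw [volume_pi_pi]
    simp only [Real.volume_Icc, add_sub_cancel_left]
    rw [Finset.prod_const, Finset.card_univ, Fintype.card_fin]
    exact (ENNReal.pow_lt_top ENNReal.ofReal_lt_top).ne

lemma setLIntegral_pos_of_ae_pos {f : (Fin d → ℝ) → ℝ≥0∞} (hf : Measurable f)
    (h0 : ∀ᵐ x ∂(volume : Measure (Fin d → ℝ)), f x ≠ 0) {S : Set (Fin d → ℝ)}
    (hSpos : 0 < volume S) : 0 < ∫⁻ x in S, f x ∂volume := by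
  rw [lintegral_pos_iff_support hf, Measure.restrict_apply (measurableSet_support hf)]
  rw [Set.inter_comm, measure_inter_conull ?_]
  · exact hSpos
  · have : (Function.support f)ᶜ = {x | f x = 0} := by
      ext x
      simp [Function.support]
    rw [this]
    have h := ae_iff.1 h0
    simpa using h

lemma holder_ineq {t : ℝ} (ht : 1 < t) (hg : Measurable g)
    (hg0 : ∀ᵐ x ∂(volume : Measure (Fin d → ℝ)), 0 < g x)
    (hgt : ∀ᵐ x ∂(volume : Measure (Fin d → ℝ)), g x < ⊤)
    (E : Set (Fin d → ℝ)) :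
    volume E ≤ (∫⁻ x in E, g x ∂volume) ^ (1/t) *
      (∫⁻ x in E, g x ^ (-1/(t-1)) ∂volume) ^ ((t-1)/t) := by
  have ht0 : (0:ℝ) < t := by linarith
  have ht1 : (0:ℝ) < t - 1 := by linarith
  have hconj : Real.HolderConjugate t (t/(t-1)) := Real.HolderConjugate.conjExponent ht
  have step1 : volume E = ∫⁻ x in E, (fun y => g y ^ (1/t)) x * (fun y => g y ^ (-1/t)) x
      ∂volume := by
    rw [← setLIntegral_one E]
    refine lintegral_congr_ae ?_
    filter_upwards [ae_restrict_of_ae hg0, ae_restrict_of_ae hgt] with x hx0 hxt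
    rw [← ENNReal.rpow_add _ _ hx0.ne' hxt.ne,
      show (1:ℝ)/t + -1/t = 0 by ring, ENNReal.rpow_zero]
  have step2 := ENNReal.lintegral_mul_le_Lp_mul_Lq (volume.restrict E) hconj
    (f := fun y => g y ^ (1/t)) (g := fun y => g y ^ (-1/t))
    (by fun_prop) (by fun_prop)
  have e1 : ∀ x, (g x ^ (1/t:ℝ)) ^ t = g x := by
    intro x
    rw [← ENNReal.rpow_mul, one_div, inv_mul_cancel₀ ht0.ne', ENNReal.rpow_one]
  have e2 : ∀ x, (g x ^ (-1/t:ℝ)) ^ (t/(t-1)) = g x ^ (-1/(t-1)) := by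
    intro x
    rw [← ENNReal.rpow_mul]
    congr 1
    field_simp
  have e3 : 1 / (t/(t-1)) = (t-1)/t := by field_simp
  rw [step1]
  refine step2.trans (le_of_eq ?_)
  simp only [e1, e2, e3]

lemma At_package {t : ℝ} (ht : 1 < t) {K : ℝ≥0∞} (hKt : K ≠ ⊤) (hg : Measurable g)
    (hg0 : ∀ᵐ x ∂(volume : Measure (Fin d → ℝ)), 0 < g x)
    (hgt : ∀ᵐ x ∂(volume : Measure (Fin d → ℝ)), g x < ⊤)
    (hA : ∀ Q : Set (Fin d → ℝ), IsCube Q →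
      (∫⁻ x in Q, g x ∂volume) * (∫⁻ x in Q, g x ^ (-1/(t-1)) ∂volume) ^ (t-1) ≤
        K * (volume Q) ^ t) :
    (∀ Q : Set (Fin d → ℝ), IsCube Q → volume.withDensity g Q < ⊤) ∧
    (∀ Q : Set (Fin d → ℝ), IsCube Q → 0 < volume.withDensity g Q) ∧
    (∀ Q : Set (Fin d → ℝ), IsCube Q → ∀ E ⊆ Q, MeasurableSet E →
      2 * volume E ≤ volume Q →
      volume.withDensity g E ≤ (1 - (2:ℝ≥0∞)⁻¹ ^ t * K⁻¹) * volume.withDensity g Q) := by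
  have ht0 : (0:ℝ) < t := by linarith
  have ht1 : (0:ℝ) < t - 1 := by linarith
  have hg0' : ∀ᵐ x ∂(volume : Measure (Fin d → ℝ)), g x ≠ 0 := hg0.mono fun x h => h.ne'
  have hsig0 : ∀ᵐ x ∂(volume : Measure (Fin d → ℝ)), g x ^ (-1/(t-1)) ≠ 0 := by
    filter_upwards [hgt] with x hx
    rw [ne_eq, ENNReal.rpow_eq_zero_iff]
    push_neg
    constructor
    · intro h
      exact (div_neg_of_neg_of_pos (by norm_num) ht1).le
    · intro h
      exact absurd h hx.ne
  -- positivity and finiteness on cubes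
  have hpos : ∀ Q : Set (Fin d → ℝ), IsCube Q → 0 < volume.withDensity g Q := by
    intro Q hQ
    obtain ⟨hQm, hQpos, hQtop⟩ := cube_facts hQ
    rw [withDensity_apply g hQm]
    exact setLIntegral_pos_of_ae_pos hg hg0' hQpos
  have hP0 : ∀ Q : Set (Fin d → ℝ), IsCube Q →
      0 < ∫⁻ x in Q, g x ^ (-1/(t-1)) ∂volume := by
    intro Q hQ
    obtain ⟨hQm, hQpos, hQtop⟩ := cube_facts hQ
    exact setLIntegral_pos_of_ae_pos (by fun_prop) hsig0 hQpos
  have hK0 : K ≠ 0 := by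
    intro hK
    obtain ⟨Q, hQ⟩ : ∃ Q : Set (Fin d → ℝ), IsCube Q :=
      ⟨_, ⟨(fun _ => 0), 1, one_pos, rfl⟩⟩
    have h := hA Q hQ
    rw [hK, zero_mul, le_zero_iff, mul_eq_zero] at h
    rcases h with h | h
    · rw [← withDensity_apply g (cube_facts hQ).1] at h
      exact absurd h (hpos Q hQ).ne'
    · rw [ENNReal.rpow_eq_zero_iff] at h
      rcases h with ⟨h, _⟩ | ⟨_, h⟩
      · exact absurd h (hP0 Q hQ).ne'
      · linarith
  have hfin : ∀ Q : Set (Fin d → ℝ), IsCube Q → volume.withDensity g Q < ⊤ := by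
    intro Q hQ
    obtain ⟨hQm, hQpos, hQtop⟩ := cube_facts hQ
    have h := hA Q hQ
    rw [withDensity_apply g hQm]
    by_contra htop
    push_neg at htop
    rw [top_le_iff] at htop
    rw [htop, ENNReal.top_mul (by
      rw [ne_eq, ENNReal.rpow_eq_zero_iff]
      push_neg
      exact ⟨fun h0 => absurd h0 (hP0 Q hQ).ne', fun _ => by linarith⟩)] at h
    rw [top_le_iff] at h
    exact (ENNReal.mul_lt_top hKt.lt_top
      (ENNReal.rpow_lt_top_of_nonneg ht0.le hQtop)).ne h
  -- the starred inequality
  have hstar : ∀ Q : Set (Fin d → ℝ), IsCube Q → ∀ E ⊆ Q, MeasurableSet E →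
      (volume E) ^ t * volume.withDensity g Q ≤
        K * (volume Q) ^ t * volume.withDensity g E := by
    intro Q hQ E hEQ hE
    obtain ⟨hQm, hQpos, hQtop⟩ := cube_facts hQ
    have h1 := holder_ineq ht hg hg0 hgt E
    have h2 : (volume E) ^ t ≤ volume.withDensity g E *
        (∫⁻ x in Q, g x ^ (-1/(t-1)) ∂volume) ^ (t-1) := by
      calc (volume E) ^ t
          ≤ ((∫⁻ x in E, g x ∂volume) ^ (1/t) *
            (∫⁻ x in E, g x ^ (-1/(t-1)) ∂volume) ^ ((t-1)/t)) ^ t :=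
            ENNReal.rpow_le_rpow h1 ht0.le
        _ = (∫⁻ x in E, g x ∂volume) *
            (∫⁻ x in E, g x ^ (-1/(t-1)) ∂volume) ^ (t-1) := by
            rw [ENNReal.mul_rpow_of_nonneg _ _ ht0.le, ← ENNReal.rpow_mul, ← ENNReal.rpow_mul]
            congr 2 <;> field_simp
            exact ENNReal.rpow_one _
        _ ≤ volume.withDensity g E * (∫⁻ x in Q, g x ^ (-1/(t-1)) ∂volume) ^ (t-1) := by
            rw [withDensity_apply g hE]
            exact mul_le_mul_right (ENNReal.rpow_le_rpow
              (lintegral_mono_set hEQ) ht1.le) _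
    calc (volume E) ^ t * volume.withDensity g Q
        ≤ (volume.withDensity g E * (∫⁻ x in Q, g x ^ (-1/(t-1)) ∂volume) ^ (t-1)) *
            volume.withDensity g Q := mul_le_mul_left h2 _
      _ = volume.withDensity g E * ((∫⁻ x in Q, g x ∂volume) *
            (∫⁻ x in Q, g x ^ (-1/(t-1)) ∂volume) ^ (t-1)) := by
          rw [withDensity_apply g hQm]
          ring
      _ ≤ volume.withDensity g E * (K * (volume Q) ^ t) :=
          mul_le_mul_right (hA Q hQ) _
      _ = K * (volume Q) ^ t * volume.withDensity g E := by ring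
  refine ⟨hfin, hpos, ?_⟩
  intro Q hQ E hEQ hE hhalf
  obtain ⟨hQm, hQpos, hQtop⟩ := cube_facts hQ
  set νQ := volume.withDensity g Q with hνQ
  set νE := volume.withDensity g E with hνE
  set νF := volume.withDensity g (Q \ E) with hνF
  have hEtop : volume E ≠ ⊤ := (lt_of_le_of_lt (measure_mono hEQ) hQtop.lt_top).ne
  have hsum : volume E + volume (Q \ E) = volume Q := by
    rw [← measure_inter_add_diff Q hE, Set.inter_eq_self_of_subset_right hEQ]
  have hvolEF : volume E ≤ volume (Q \ E) := by
    have h2E : volume E + volume E ≤ volume E + volume (Q \ E) := by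
      rw [← two_mul, hsum]
      exact hhalf
    exact (ENNReal.add_le_add_iff_left hEtop).1 h2E
  have hQ2F : volume Q ≤ 2 * volume (Q \ E) := by
    rw [← hsum, two_mul]
    exact add_le_add_left hvolEF _
  have hstarF := hstar Q hQ (Q \ E) Set.diff_subset (hQm.diff hE)
  have hkey : volume.withDensity g Q ≤ (2:ℝ≥0∞) ^ t * K * νF := by
    have h1 : (volume Q) ^ t * νQ ≤ ((2:ℝ≥0∞) ^ t * K * νF) * (volume Q) ^ t := by
      calc (volume Q) ^ t * νQ
          ≤ (2 * volume (Q \ E)) ^ t * νQ := by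
            exact mul_le_mul_left (ENNReal.rpow_le_rpow hQ2F ht0.le) _
        _ = 2 ^ t * ((volume (Q \ E)) ^ t * νQ) := by
            rw [ENNReal.mul_rpow_of_nonneg _ _ ht0.le]
            ring
        _ ≤ 2 ^ t * (K * (volume Q) ^ t * νF) := mul_le_mul_right hstarF _
        _ = ((2:ℝ≥0∞) ^ t * K * νF) * (volume Q) ^ t := by ring
    have hvt0 : (volume Q) ^ t ≠ 0 := (ENNReal.rpow_pos hQpos hQtop).ne'
    have hvtt : (volume Q) ^ t ≠ ⊤ := (ENNReal.rpow_lt_top_of_nonneg ht0.le hQtop).ne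
    have := (ENNReal.mul_le_mul_iff_left hvt0 hvtt).1 (by
      calc νQ * (volume Q) ^ t = (volume Q) ^ t * νQ := by ring
        _ ≤ ((2:ℝ≥0∞) ^ t * K * νF) * (volume Q) ^ t := h1)
    exact this
  set c : ℝ≥0∞ := (2:ℝ≥0∞)⁻¹ ^ t * K⁻¹ with hc
  have hcF : c * νQ ≤ νF := by
    calc c * νQ ≤ c * ((2:ℝ≥0∞) ^ t * K * νF) := mul_le_mul_right hkey _
      _ = ((2:ℝ≥0∞)⁻¹ ^ t * 2 ^ t) * (K⁻¹ * K) * νF := by rw [hc]; ring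
      _ = νF := by
          rw [← ENNReal.mul_rpow_of_nonneg _ _ ht0.le, ENNReal.inv_mul_cancel
            (by norm_num) (by norm_num), ENNReal.one_rpow,
            ENNReal.inv_mul_cancel hK0 hKt]
          ring
  have hsumν : νE + νF = νQ := by
    rw [hνE, hνF, hνQ, ← measure_inter_add_diff Q hE,
      Set.inter_eq_self_of_subset_right hEQ]
  have hcQtop : c * νQ ≠ ⊤ := by
    refine ENNReal.mul_ne_top (ENNReal.mul_ne_top ?_ (ENNReal.inv_ne_top.2 hK0))
      (hfin Q hQ).ne
    exact (ENNReal.rpow_lt_top_of_nonneg ht0.le (by norm_num)).ne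
  have h1 : νE + c * νQ ≤ νQ := by
    calc νE + c * νQ ≤ νE + νF := add_le_add_right hcF _
      _ = νQ := hsumν
  have h2 : νE ≤ νQ - c * νQ := ENNReal.le_sub_of_add_le_right hcQtop h1
  refine h2.trans (le_of_eq ?_)
  rw [ENNReal.sub_mul (fun _ _ => (hfin Q hQ).ne), one_mul]

lemma Dcl_zero (b : Fin d → ℝ) (ρ : ℝ) :
    Dcl b ρ 0 0 = Set.univ.pi fun i => Set.Icc (b i) (b i + ρ) := by
  unfold Dcl sl
  norm_num

theorem RHI {t : ℝ} (ht : 1 < t) {K : ℝ≥0∞} (hKt : K ≠ ⊤) (hg : Measurable g)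
    (hg0 : ∀ᵐ x ∂(volume : Measure (Fin d → ℝ)), 0 < g x)
    (hgt : ∀ᵐ x ∂(volume : Measure (Fin d → ℝ)), g x < ⊤)
    (hA : ∀ Q : Set (Fin d → ℝ), IsCube Q →
      (∫⁻ x in Q, g x ∂volume) * (∫⁻ x in Q, g x ^ (-1/(t-1)) ∂volume) ^ (t-1) ≤
        K * (volume Q) ^ t) :
    ∃ ε : ℝ, 0 < ε ∧ ∃ C : ℝ≥0∞, C ≠ ⊤ ∧ ∀ Q : Set (Fin d → ℝ), IsCube Q →
      ∫⁻ x in Q, g x ^ (1 + ε) ∂volume ≤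
        C * (volume.withDensity g Q / volume Q) ^ ε * volume.withDensity g Q := by
  have ht0 : (0:ℝ) < t := by linarith
  obtain ⟨hfin, hpos, hsm0⟩ := At_package ht hKt hg hg0 hgt hA
  set β : ℝ≥0∞ := max (1 - (2:ℝ≥0∞)⁻¹ ^ t * K⁻¹) 2⁻¹ with hβ
  have hβ1 : β < 1 := by
    rw [hβ, max_lt_iff]
    constructor
    · refine ENNReal.sub_lt_self one_ne_top one_ne_zero ?_
      refine mul_ne_zero ?_ (ENNReal.inv_ne_zero.2 hKt)
      exact (ENNReal.rpow_pos (by norm_num) (by norm_num)).ne'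
    · exact ENNReal.inv_lt_one.2 one_lt_two
  have hβh : (2:ℝ≥0∞)⁻¹ ≤ β := le_max_right _ _
  have hβ0 : β ≠ 0 := fun h => by
    rw [h] at hβh
    exact absurd (le_zero_iff.1 hβh) (by norm_num)
  have hβt : β ≠ ⊤ := hβ1.ne_top
  have hsm : ∀ Q : Set (Fin d → ℝ), IsCube Q → ∀ E ⊆ Q, MeasurableSet E →
      2 * volume E ≤ volume Q →
      volume.withDensity g E ≤ β * volume.withDensity g Q := fun Q hQ E hEQ hE hh =>
    (hsm0 Q hQ E hEQ hE hh).trans (mul_le_mul_left (le_max_left _ _) _)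
  -- choose ε
  set βr : ℝ := β.toReal with hβr
  have hβrpos : 0 < βr := ENNReal.toReal_pos hβ0 hβt
  have hβr1 : βr < 1 := by
    have := ENNReal.toReal_lt_toReal hβt ENNReal.one_ne_top |>.2 hβ1
    simpa using this
  set Mr : ℝ := 2 ^ (d+1) with hMr
  have hMr1 : (1:ℝ) < Mr := one_lt_pow₀ (by norm_num) (Nat.succ_ne_zero d)
  have hlogM : 0 < Real.log Mr := Real.log_pos hMr1
  have hlogβ : Real.log βr < 0 := Real.log_neg hβrpos hβr1
  set ε : ℝ := (- Real.log βr) / (2 * Real.log Mr) with hε'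
  have hε : 0 < ε := div_pos (by linarith) (by linarith)
  have hMre : Mr ^ ε * βr < 1 := by
    rw [Real.rpow_def_of_pos (by linarith)]
    have hεL : Real.log Mr * ε = - Real.log βr / 2 := by
      rw [hε']
      field_simp
    rw [hεL]
    calc Real.exp (-Real.log βr / 2) * βr
        = Real.exp (-Real.log βr / 2) * Real.exp (Real.log βr) := by
          rw [Real.exp_log hβrpos]
      _ = Real.exp (Real.log βr / 2) := by
          rw [← Real.exp_add]
          ring_nf
      _ < 1 := by
          rw [Real.exp_lt_one_iff]
          linarith
  have hXeq : ((2:ℝ≥0∞) ^ (d+1)) ^ ε = ENNReal.ofReal (Mr ^ ε) := by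
    rw [show ((2:ℝ≥0∞) ^ (d+1)) = ENNReal.ofReal Mr by
      rw [hMr, ENNReal.ofReal_pow (by norm_num)]
      norm_num]
    rw [ENNReal.ofReal_rpow_of_pos (by linarith)]
  have hc : ((2:ℝ≥0∞) ^ (d+1)) ^ ε * β < 1 := by
    rw [hXeq, show β = ENNReal.ofReal βr from (ENNReal.ofReal_toReal hβt).symm,
      ← ENNReal.ofReal_mul (Real.rpow_nonneg (by linarith) ε)]
    exact ENNReal.ofReal_lt_one.2 hMre
  refine ⟨ε, hε, 1 + ((2:ℝ≥0∞) ^ (d+1)) ^ ε * (1 - ((2:ℝ≥0∞) ^ (d+1)) ^ ε * β)⁻¹, ?_, ?_⟩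
  · refine ENNReal.add_ne_top.2 ⟨ENNReal.one_ne_top, ENNReal.mul_ne_top ?_ ?_⟩
    · exact (ENNReal.rpow_lt_top_of_nonneg hε.le (ENNReal.pow_ne_top (by norm_num))).ne
    · rw [ENNReal.inv_ne_top]
      exact (tsub_pos_of_lt hc).ne'
  · intro Q hQ
    obtain ⟨b, ρ, hρ, rfl⟩ := hQ
    have h := RHI_cube (a := b) (r := ρ) hρ hβ1 hg hfin hpos hsm hε hc
    rw [Dcl_zero b ρ] at h
    rw [Av, Dcl_zero b ρ] at h
    exact h

end ApOpen
open ApOpen Set MeasureTheory Filter Topology ENNReal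

/-- Openness of the Muckenhoupt classes: if `w ∈ A_p(ℝ^d)`, `1 < p < ∞`,
then `w ∈ A_q(ℝ^d)` for some `1 < q < p`. -/
theorem Ap_openness (d : ℕ) (p : ℝ) (hp : 1 < p)
    (w : (Fin d → ℝ) → ℝ) (hw : MemAp p w) :
    ∃ q : ℝ, 1 < q ∧ q < p ∧ MemAp q w := by
  classical
  obtain ⟨hwweight, hAp⟩ := hw
  obtain ⟨hwloc, hwpos⟩ := hwweight
  have hp1 : (0:ℝ) < p - 1 := by linarith
  have hwm : AEMeasurable w (volume : Measure (Fin d → ℝ)) :=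
    hwloc.aestronglyMeasurable.aemeasurable
  have hSig_aem : AEMeasurable (fun x => oR (w x ^ (-(1:ℝ)/(p-1))))
      (volume : Measure (Fin d → ℝ)) := by
    unfold oR
    fun_prop
  set g : (Fin d → ℝ) → ℝ≥0∞ := hSig_aem.mk _ with hgdef
  have hgmeas : Measurable g := hSig_aem.measurable_mk
  have hgeq : (fun x => oR (w x ^ (-(1:ℝ)/(p-1)))) =ᵐ[volume] g := hSig_aem.ae_eq_mk
  set t : ℝ := p / (p-1) with htdef
  have ht : 1 < t := by
    rw [htdef, lt_div_iff₀ hp1]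
    linarith
  have hts : t - 1 = 1/(p-1) := by
    rw [htdef]
    field_simp
    ring
  have hexp : -1/(t-1) = -(p-1) := by
    rw [hts]
    field_simp
  set K : ℝ≥0∞ := (ApConst p w) ^ (t-1) with hKdef
  have hKt : K ≠ ⊤ := (ENNReal.rpow_lt_top_of_nonneg (by linarith) hAp.ne).ne
  have hg0 : ∀ᵐ x ∂(volume : Measure (Fin d → ℝ)), 0 < g x := by
    filter_upwards [hwpos, hgeq] with x hx heq
    rw [← heq]
    exact ENNReal.ofReal_pos.2 (Real.rpow_pos_of_pos hx _)
  have hgt : ∀ᵐ x ∂(volume : Measure (Fin d → ℝ)), g x < ⊤ := by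
    filter_upwards [hgeq] with x heq
    rw [← heq]
    exact ENNReal.ofReal_lt_top
  have hGW : (fun x => g x ^ (-(p-1))) =ᵐ[volume] fun x => oR (w x) := by
    filter_upwards [hwpos, hgeq] with x hx heq
    unfold oR at heq ⊢
    rw [← heq, ENNReal.ofReal_rpow_of_pos (Real.rpow_pos_of_pos hx _),
      ← Real.rpow_mul hx.le, show (-(1:ℝ)/(p-1)) * (-(p-1)) = 1 by field_simp,
      Real.rpow_one]
  have hA : ∀ Q : Set (Fin d → ℝ), IsCube Q →
      (∫⁻ x in Q, g x ∂volume) * (∫⁻ x in Q, g x ^ (-1/(t-1)) ∂volume) ^ (t-1) ≤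
        K * (volume Q) ^ t := by
    intro Q hQ
    obtain ⟨hQm, hQ0, hQt⟩ := cube_facts hQ
    have apQ : avgE Q (fun x => oR (w x)) *
        (avgE Q fun x => oR (w x ^ (-(1:ℝ)/(p-1)))) ^ (p-1) ≤ ApConst p w := by
      have := le_iSup (fun S : {S : Set (Fin d → ℝ) // IsCube S} =>
        avgE S.1 (fun x => oR (w x)) *
          (avgE S.1 fun x => oR (w x ^ (-(1:ℝ) / (p - 1)))) ^ (p - 1)) ⟨Q, hQ⟩
      exact this
    set A : ℝ≥0∞ := avgE Q (fun x => oR (w x)) with hAdef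
    set B : ℝ≥0∞ := avgE Q (fun x => oR (w x ^ (-(1:ℝ)/(p-1)))) with hBdef
    have hIg : ∫⁻ x in Q, g x ∂volume = volume Q * B := by
      rw [hBdef]
      unfold avgE
      rw [← mul_assoc, ENNReal.mul_inv_cancel hQ0.ne' hQt, one_mul]
      exact (lintegral_congr_ae (ae_restrict_of_ae hgeq)).symm
    have hIw : ∫⁻ x in Q, g x ^ (-1/(t-1)) ∂volume = volume Q * A := by
      simp only [hexp]
      rw [hAdef]
      unfold avgE
      rw [← mul_assoc, ENNReal.mul_inv_cancel hQ0.ne' hQt, one_mul]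
      exact lintegral_congr_ae (ae_restrict_of_ae hGW)
    rw [hIg, hIw]
    have hBA : B * A ^ (t-1) ≤ K := by
      have h1 : (A * B ^ (p-1)) ^ (t-1) ≤ K := by
        rw [hKdef]
        exact ENNReal.rpow_le_rpow apQ (by linarith)
      have h2 : (A * B ^ (p-1)) ^ (t-1) = A ^ (t-1) * B := by
        rw [ENNReal.mul_rpow_of_nonneg _ _ (by linarith : (0:ℝ) ≤ t - 1),
          ← ENNReal.rpow_mul, show (p-1) * (t-1) = 1 by rw [hts]; field_simp,
          ENNReal.rpow_one]
      calc B * A ^ (t-1) = A ^ (t-1) * B := by ring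
        _ = (A * B ^ (p-1)) ^ (t-1) := h2.symm
        _ ≤ K := h1
    calc volume Q * B * (volume Q * A) ^ (t-1)
        = (volume Q * (volume Q) ^ (t-1)) * (B * A ^ (t-1)) := by
          rw [ENNReal.mul_rpow_of_nonneg _ _ (by linarith : (0:ℝ) ≤ t - 1)]
          ring
      _ = (volume Q) ^ t * (B * A ^ (t-1)) := by
          congr 1
          nth_rewrite 1 [← ENNReal.rpow_one (volume Q)]
          rw [← ENNReal.rpow_add _ _ hQ0.ne' hQt]
          norm_num
      _ ≤ (volume Q) ^ t * K := mul_le_mul_right hBA _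
      _ = K * (volume Q) ^ t := by ring
  obtain ⟨hfin, hposν, _⟩ := At_package ht hKt hgmeas hg0 hgt hA
  obtain ⟨ε, hε, C, hCt, hC⟩ := RHI ht hKt hgmeas hg0 hgt hA
  set q : ℝ := 1 + (p-1)/(1+ε) with hqdef
  have hq1 : 1 < q := by
    rw [hqdef]
    have : 0 < (p-1)/(1+ε) := div_pos hp1 (by linarith)
    linarith
  have hqp : q < p := by
    rw [hqdef]
    have : (p-1)/(1+ε) < p - 1 := div_lt_self hp1 (by linarith)
    linarith
  have hq1' : q - 1 = (p-1)/(1+ε) := by rw [hqdef]; ring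
  have hqe : (1+ε) * (q-1) = p - 1 := by
    rw [hq1']
    field_simp
  have hexpq : -(1:ℝ)/(q-1) = (-(1:ℝ)/(p-1)) * (1+ε) := by
    rw [hq1']
    field_simp
  have hσq : (fun x => oR (w x ^ (-(1:ℝ)/(q-1)))) =ᵐ[volume] fun x => g x ^ (1+ε) := by
    filter_upwards [hwpos, hgeq] with x hx heq
    unfold oR at heq ⊢
    rw [← heq, hexpq, Real.rpow_mul hx.le,
      ENNReal.ofReal_rpow_of_pos (Real.rpow_pos_of_pos hx _)]
  refine ⟨q, hq1, hqp, ⟨hwloc, hwpos⟩, ?_⟩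
  have hbound : ApConst q w ≤ C ^ (q-1) * ApConst p w := by
    unfold ApConst
    refine iSup_le fun S => ?_
    obtain ⟨hQm, hQ0, hQt⟩ := cube_facts S.2
    set Q := S.1 with hQdef
    set A : ℝ≥0∞ := avgE Q (fun x => oR (w x)) with hAdef
    set B : ℝ≥0∞ := avgE Q (fun x => oR (w x ^ (-(1:ℝ)/(p-1)))) with hBdef
    have hν : volume.withDensity g Q = volume Q * B := by
      rw [withDensity_apply g hQm, hBdef]
      unfold avgE
      rw [← mul_assoc, ENNReal.mul_inv_cancel hQ0.ne' hQt, one_mul]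
      exact (lintegral_congr_ae (ae_restrict_of_ae hgeq)).symm
    have hB0 : B ≠ 0 := by
      intro h
      have := hposν Q S.2
      rw [hν, h, mul_zero] at this
      exact absurd rfl this.ne'
    have hBt : B ≠ ⊤ := by
      intro h
      have := hfin Q S.2
      rw [hν, h, ENNReal.mul_top hQ0.ne'] at this
      exact absurd rfl this.ne
    have hstepA : avgE Q (fun x => oR (w x ^ (-(1:ℝ)/(q-1)))) ≤ C * B ^ (1+ε) := by
      have hint : ∫⁻ x in Q, oR (w x ^ (-(1:ℝ)/(q-1))) ∂volume =
          ∫⁻ x in Q, g x ^ (1+ε) ∂volume :=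
        lintegral_congr_ae (ae_restrict_of_ae hσq)
      have hdiv : volume.withDensity g Q / volume Q = B := by
        rw [hν, mul_comm, mul_div_assoc, ENNReal.div_self hQ0.ne' hQt, mul_one]
      unfold avgE
      rw [hint]
      calc (volume Q)⁻¹ * ∫⁻ x in Q, g x ^ (1+ε) ∂volume
          ≤ (volume Q)⁻¹ * (C * (volume.withDensity g Q / volume Q) ^ ε *
              volume.withDensity g Q) := mul_le_mul_right (hC Q S.2) _
        _ = (volume Q)⁻¹ * (C * B ^ ε * (volume Q * B)) := by rw [hdiv, hν]
        _ = ((volume Q)⁻¹ * volume Q) * (C * (B ^ ε * B)) := by ring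
        _ = C * (B ^ ε * B) := by
            rw [ENNReal.inv_mul_cancel hQ0.ne' hQt, one_mul]
        _ = C * B ^ (1+ε) := by
            congr 1
            nth_rewrite 2 [← ENNReal.rpow_one B]
            rw [← ENNReal.rpow_add _ _ hB0 hBt, add_comm]
    have apQ : A * B ^ (p-1) ≤ ApConst p w := by
      have := le_iSup (fun S : {S : Set (Fin d → ℝ) // IsCube S} =>
        avgE S.1 (fun x => oR (w x)) *
          (avgE S.1 fun x => oR (w x ^ (-(1:ℝ) / (p - 1)))) ^ (p - 1)) S
      exact this
    calc A * (avgE Q fun x => oR (w x ^ (-(1:ℝ)/(q-1)))) ^ (q-1)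
        ≤ A * (C * B ^ (1+ε)) ^ (q-1) :=
          mul_le_mul_right (ENNReal.rpow_le_rpow hstepA (by linarith)) _
      _ = C ^ (q-1) * (A * B ^ (p-1)) := by
          rw [ENNReal.mul_rpow_of_nonneg _ _ (by linarith : (0:ℝ) ≤ q - 1),
            ← ENNReal.rpow_mul, hqe]
          ring
      _ ≤ C ^ (q-1) * ApConst p w := mul_le_mul_right apQ _
  refine lt_of_le_of_lt hbound ?_
  exact ENNReal.mul_lt_top (ENNReal.rpow_lt_top_of_nonneg (by linarith) hCt) hAp
end
end
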